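/- arXiv:2302.07914 — 5 statements merged into one kernel-verified Lean document; each statement's English description precedes it below -/
import Mathlib

section
/- Let n > 2 and 2 ≤ k ≤ n with 2k ≠ n + 2. Let Ω be the set of (k−1)-element subsets of Fin n, and let W be the wreath product ℤ/2ℤ ≀_Ω S_n, realized as the semidirect product (Ω → ℤ/2ℤ) ⋊ Perm(Fin n), where a permutation σ of Fin n acts on a function f : Ω → ℤ/2ℤ by (σ · f)(S) = f(σ⁻¹(S)) (with σ acting on subsets elementwise). Then Aut(F_k(K_{2,n})) is isomorphic as a group to W. -/
def tokenGraph {V : Type*} [DecidableEq V] (G : SimpleGraph V) (k : ℕ) :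
    SimpleGraph {A : Finset V // A.card = k} where
  Adj A B := ∃ a b, G.Adj a b ∧ symmDiff A.1 B.1 = {a, b}
  symm := by
    constructor
    rintro A B ⟨a, b, hab, h⟩
    exact ⟨a, b, hab, by rwa [symmDiff_comm]⟩
  loopless := by
    constructor
    rintro A ⟨a, b, hab, h⟩
    rw [symmDiff_self] at h
    exact absurd h.symm (by simp)

/-- The elementwise action of a permutation of `Fin n` on the `j`-element
subsets of `Fin n`, as an equivalence. -/
def permSubsets (n j : ℕ) (σ : Equiv.Perm (Fin n)) :
    {S : Finset (Fin n) // S.card = j} ≃ {S : Finset (Fin n) // S.card = j} where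
  toFun S := ⟨S.1.image σ, by rw [Finset.card_image_of_injective _ σ.injective, S.2]⟩
  invFun S := ⟨S.1.image ⇑(σ⁻¹), by rw [Finset.card_image_of_injective _ (σ⁻¹).injective, S.2]⟩
  left_inv S := Subtype.ext (by
    simp [Finset.image_image, Function.comp_def])
  right_inv S := Subtype.ext (by
    simp [Finset.image_image, Function.comp_def])

/-- The action of `S_n` on `(ℤ/2ℤ)^Ω`, where `Ω` is the set of `j`-element
subsets of `Fin n` : a permutation `σ` sends `f` to `S ↦ f (σ⁻¹ S)`,
`σ⁻¹` acting on subsets elementwise. -/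
def wreathAction (n j : ℕ) :
    Equiv.Perm (Fin n) →*
      MulAut ({S : Finset (Fin n) // S.card = j} → Multiplicative (ZMod 2)) where
  toFun σ :=
    { toFun := fun f S => f (permSubsets n j (σ⁻¹) S)
      invFun := fun f S => f (permSubsets n j σ S)
      left_inv := fun f => funext fun S => congrArg f (by
        simp [permSubsets, Finset.image_image, Function.comp_def])
      right_inv := fun f => funext fun S => congrArg f (by
        simp [permSubsets, Finset.image_image, Function.comp_def])
      map_mul' := fun f g => rfl }
  map_one' := by
    ext f S
    exact congrArg f (by simp [permSubsets])
  map_mul' := fun σ τ => by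
    ext f S
    exact congrArg f (by
      simp [permSubsets, Finset.image_image, Function.comp_def, mul_inv_rev])


open Finset

variable {α : Type*} [DecidableEq α]

/-- Two distinct common (m+1)-supersets of an m-set intersect exactly in it. -/
lemma inter_of_sup {W T T' : Finset α} {m : ℕ} (hW : W.card = m) (hT : T.card = m+1)
    (hT' : T'.card = m+1) (h1 : W ⊆ T) (h2 : W ⊆ T') (hne : T ≠ T') : T ∩ T' = W := by
  have hsub : W ⊆ T ∩ T' := subset_inter h1 h2
  have hlt : T ∩ T' ≠ T := by
    intro h
    exact hne (eq_of_subset_of_card_le (by rw [← h]; exact inter_subset_right) (by omega))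
  have h3 : T ∩ T' ⊂ T := Finset.ssubset_iff_subset_ne.2 ⟨inter_subset_left, hlt⟩
  have h4 := card_lt_card h3
  exact (eq_of_subset_of_card_le hsub (by omega)).symm

lemma union_card_of_inter {T T' : Finset α} {m : ℕ} (hT : T.card = m+1) (hT' : T'.card = m+1)
    (h : (T ∩ T').card = m) : (T ∪ T').card = m + 2 := by
  have := card_inter_add_card_union T T'
  omega

lemma inter_card_of_union {T T' : Finset α} {m : ℕ} (hT : T.card = m+1) (hT' : T'.card = m+1)
    (h : (T ∪ T').card = m+2) : (T ∩ T').card = m := by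
  have := card_inter_add_card_union T T'
  omega

/-- If T ≠ T' (cards m+1) are contained in R of card m+2, then R = T ∪ T'. -/
lemma union_eq_of_subset {T T' R : Finset α} {m : ℕ} (hT : T.card = m+1) (hT' : T'.card = m+1)
    (hR : R.card = m+2) (h1 : T ⊆ R) (h2 : T' ⊆ R) (hne : T ≠ T') : T ∪ T' = R := by
  have hsub : T ∪ T' ⊆ R := union_subset h1 h2
  have hlt : T ≠ T ∪ T' → T.card < (T ∪ T').card := fun h =>
    card_lt_card (Finset.ssubset_iff_subset_ne.2 ⟨subset_union_left, h⟩)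
  have hcase : T = T ∪ T' ∨ T.card < (T ∪ T').card := by
    by_cases h : T = T ∪ T'
    · exact Or.inl h
    · exact Or.inr (hlt h)
  have hTT : m + 1 < (T ∪ T').card := by
    rcases hcase with h | h
    · have hs : T' ⊆ T := by rw [h]; exact subset_union_right
      exact absurd (eq_of_subset_of_card_le hs (by omega)).symm hne
    · omega
  have := card_le_card hsub
  exact eq_of_subset_of_card_le hsub (by omega)

/-- A triple of pairwise distinct (m+1)-sets with pairwise unions of card m+2:
either all contain a common m-set, or the third is inside the union of the first two. -/
lemma triple_lemma {T1 T2 T3 : Finset α} {m : ℕ} (h1 : T1.card = m+1) (h2 : T2.card = m+1)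
    (h3 : T3.card = m+1) (h13 : (T1 ∪ T3).card = m+2) (h23 : (T2 ∪ T3).card = m+2)
    (hsub : ¬ T3 ⊆ T1 ∪ T2) :
    ∃ W : Finset α, W.card = m ∧ W ⊆ T1 ∧ W ⊆ T2 ∧ W ⊆ T3 := by
  obtain ⟨z, hz3, hz12⟩ : ∃ z ∈ T3, z ∉ T1 ∪ T2 := by
    by_contra h
    push_neg at h
    exact hsub h
  rw [mem_union] at hz12
  push_neg at hz12
  have hz1 : T3 ∩ T1 = T3.erase z := by
    have hc : (T3 ∩ T1).card = m := inter_card_of_union h3 h1 (by rwa [union_comm])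
    have hsub1 : T3 ∩ T1 ⊆ T3.erase z := fun x hx => by
      rw [mem_erase]
      exact ⟨fun he => hz12.1 (he ▸ (mem_inter.1 hx).2), (mem_inter.1 hx).1⟩
    exact eq_of_subset_of_card_le hsub1 (by rw [card_erase_of_mem hz3]; omega)
  have hz2 : T3 ∩ T2 = T3.erase z := by
    have hc : (T3 ∩ T2).card = m := inter_card_of_union h3 h2 (by rwa [union_comm])
    have hsub1 : T3 ∩ T2 ⊆ T3.erase z := fun x hx => by
      rw [mem_erase]
      exact ⟨fun he => hz12.2 (he ▸ (mem_inter.1 hx).2), (mem_inter.1 hx).1⟩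
    exact eq_of_subset_of_card_le hsub1 (by rw [card_erase_of_mem hz3]; omega)
  refine ⟨T3.erase z, by rw [card_erase_of_mem hz3]; omega, ?_, ?_, erase_subset _ _⟩
  · rw [← hz1]; exact inter_subset_right
  · rw [← hz2]; exact inter_subset_right

/-- If W ⊆ T ⊆ T1 ∪ T2 with T1 ∩ T2 = W, all of card pattern, then T = T1 or T = T2. -/
lemma mem_pair_of_between {W T T1 T2 : Finset α} {m : ℕ} (hW : W.card = m)
    (hT : T.card = m+1) (h1 : T1.card = m+1) (h2 : T2.card = m+1)
    (hi : T1 ∩ T2 = W) (hWT : W ⊆ T) (hsub : T ⊆ T1 ∪ T2) : T = T1 ∨ T = T2 := by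
  obtain ⟨x, hx⟩ : ∃ x, T \ W = {x} := by
    rw [← card_eq_one]
    rw [card_sdiff_of_subset hWT]
    omega
  have hxT : x ∈ T ∧ x ∉ W := by
    have := hx ▸ (mem_singleton_self x)
    exact mem_sdiff.1 (by rw [hx]; exact mem_singleton_self x)
  have hTeq : T = insert x W := by
    apply Subset.antisymm
    · intro y hy
      by_cases hyW : y ∈ W
      · exact mem_insert_of_mem hyW
      · have : y ∈ T \ W := mem_sdiff.2 ⟨hy, hyW⟩
        rw [hx, mem_singleton] at this
        exact this ▸ mem_insert_self x W
    · exact insert_subset hxT.1 hWT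
  have hxU : x ∈ T1 ∪ T2 := hsub hxT.1
  rw [mem_union] at hxU
  rcases hxU with hx1 | hx2
  · left
    apply eq_of_subset_of_card_le _ (by omega)
    rw [hTeq]
    exact insert_subset hx1 (hi ▸ inter_subset_left)
  · right
    apply eq_of_subset_of_card_le _ (by omega)
    rw [hTeq]
    exact insert_subset hx2 (hi ▸ inter_subset_right)

/-- Existence of two distinct (m+1)-supersets of an m-set in Fin n, when m+2 ≤ n. -/
lemma two_supersets {n m : ℕ} (hmn : m + 2 ≤ n) (W : Finset (Fin n)) (hW : W.card = m) :
    ∃ T1 T2 : Finset (Fin n), T1 ≠ T2 ∧ T1.card = m+1 ∧ T2.card = m+1 ∧ W ⊆ T1 ∧ W ⊆ T2 := by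
  have hc : 2 ≤ Wᶜ.card := by
    rw [card_compl]
    simp only [Fintype.card_fin]
    omega
  obtain ⟨x, hx, y, hy, hxy⟩ := one_lt_card.1 hc
  rw [mem_compl] at hx hy
  refine ⟨insert x W, insert y W, ?_, ?_, ?_, subset_insert _ _, subset_insert _ _⟩
  · intro h
    have : x ∈ insert y W := h ▸ mem_insert_self x W
    rw [mem_insert] at this
    tauto
  · rw [card_insert_of_notMem hx, hW]
  · rw [card_insert_of_notMem hy, hW]
abbrev Lv (n j : ℕ) := {S : Finset (Fin n) // S.card = j}

def Compat {n j j' : ℕ} (b : Lv n j ≃ Lv n j) (c : Lv n j' ≃ Lv n j') : Prop :=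
  ∀ (T : Lv n j) (S : Lv n j'), T.1 ⊆ S.1 ↔ (b T).1 ⊆ (c S).1

lemma Compat.symm' {n j j' : ℕ} {b : Lv n j ≃ Lv n j} {c : Lv n j' ≃ Lv n j'}
    (h : Compat b c) : Compat b.symm c.symm := fun T S => by
  simpa using (h (b.symm T) (c.symm S)).symm

lemma lemA {n m : ℕ} {b : Lv n (m+1) ≃ Lv n (m+1)} {c : Lv n (m+2) ≃ Lv n (m+2)}
    (hbc : Compat b c) {W : Finset (Fin n)} (hW : W.card = m)
    {T1 T2 T : Lv n (m+1)} (h12 : T1 ≠ T2) (hW1 : W ⊆ T1.1) (hW2 : W ⊆ T2.1)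
    (hWT : W ⊆ T.1) :
    ((b T1).1 ∩ (b T2).1).card = m ∧ (b T1).1 ∩ (b T2).1 ⊆ (b T).1 := by
  have h12v : T1.1 ≠ T2.1 := fun h => h12 (Subtype.ext h)
  have hI12 : T1.1 ∩ T2.1 = W := inter_of_sup hW T1.2 T2.2 hW1 hW2 h12v
  have hU12 : (T1.1 ∪ T2.1).card = m + 2 :=
    union_card_of_inter T1.2 T2.2 (by rw [hI12, hW])
  set R : Lv n (m+2) := ⟨T1.1 ∪ T2.1, hU12⟩ with hR
  have hb1R : (b T1).1 ⊆ (c R).1 := (hbc T1 R).1 subset_union_left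
  have hb2R : (b T2).1 ⊆ (c R).1 := (hbc T2 R).1 subset_union_right
  have hbne : (b T1).1 ≠ (b T2).1 := fun h => h12 (b.injective (Subtype.ext h))
  have hbU : (b T1).1 ∪ (b T2).1 = (c R).1 :=
    union_eq_of_subset (b T1).2 (b T2).2 (c R).2 hb1R hb2R hbne
  have hbI : ((b T1).1 ∩ (b T2).1).card = m :=
    inter_card_of_union (b T1).2 (b T2).2 (by rw [hbU]; exact (c R).2)
  refine ⟨hbI, ?_⟩
  by_cases hT1 : T = T1
  · subst hT1; exact Finset.inter_subset_left
  by_cases hT2 : T = T2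
  · subst hT2; exact Finset.inter_subset_right
  have hT1v : T.1 ≠ T1.1 := fun h => hT1 (Subtype.ext h)
  have hT2v : T.1 ≠ T2.1 := fun h => hT2 (Subtype.ext h)
  have hI1T : T1.1 ∩ T.1 = W := inter_of_sup hW T1.2 T.2 hW1 hWT (Ne.symm hT1v)
  have hI2T : T2.1 ∩ T.1 = W := inter_of_sup hW T2.2 T.2 hW2 hWT (Ne.symm hT2v)
  have hU1T : (T1.1 ∪ T.1).card = m + 2 := union_card_of_inter T1.2 T.2 (by rw [hI1T, hW])
  have hU2T : (T2.1 ∪ T.1).card = m + 2 := union_card_of_inter T2.2 T.2 (by rw [hI2T, hW])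
  -- image unions have card m+2
  have him1 : ((b T1).1 ∪ (b T).1).card = m + 2 := by
    have h1 : (b T1).1 ⊆ (c ⟨T1.1 ∪ T.1, hU1T⟩).1 := (hbc T1 _).1 subset_union_left
    have h2 : (b T).1 ⊆ (c ⟨T1.1 ∪ T.1, hU1T⟩).1 := (hbc T _).1 subset_union_right
    have hne : (b T1).1 ≠ (b T).1 := fun h => hT1 (b.injective (Subtype.ext h)).symm
    rw [union_eq_of_subset (b T1).2 (b T).2 (c _).2 h1 h2 hne]
    exact (c _).2
  have him2 : ((b T2).1 ∪ (b T).1).card = m + 2 := by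
    have h1 : (b T2).1 ⊆ (c ⟨T2.1 ∪ T.1, hU2T⟩).1 := (hbc T2 _).1 subset_union_left
    have h2 : (b T).1 ⊆ (c ⟨T2.1 ∪ T.1, hU2T⟩).1 := (hbc T _).1 subset_union_right
    have hne : (b T2).1 ≠ (b T).1 := fun h => hT2 (b.injective (Subtype.ext h)).symm
    rw [union_eq_of_subset (b T2).2 (b T).2 (c _).2 h1 h2 hne]
    exact (c _).2
  by_cases hsub : (b T).1 ⊆ (b T1).1 ∪ (b T2).1
  · exfalso
    have : (b T).1 ⊆ (c R).1 := hbU ▸ hsub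
    have hTR : T.1 ⊆ R.1 := (hbc T R).2 this
    rcases mem_pair_of_between hW T.2 T1.2 T2.2 hI12 hWT hTR with h | h
    · exact hT1v h
    · exact hT2v h
  · obtain ⟨W', hW'c, hW'1, hW'2, hW'T⟩ :=
      triple_lemma (b T1).2 (b T2).2 (b T).2 him1 him2 hsub
    have : W' = (b T1).1 ∩ (b T2).1 :=
      Finset.eq_of_subset_of_card_le (Finset.subset_inter hW'1 hW'2) (by omega)
    rwa [← this]

lemma step_key {n m : ℕ} (hmn : m + 2 ≤ n) {b : Lv n (m+1) ≃ Lv n (m+1)}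
    {c : Lv n (m+2) ≃ Lv n (m+2)} (hbc : Compat b c) (W : Lv n m) :
    ∃ W' : Lv n m, ∀ T : Lv n (m+1), W.1 ⊆ T.1 ↔ W'.1 ⊆ (b T).1 := by
  obtain ⟨T1v, T2v, hne, hc1, hc2, h1, h2⟩ := two_supersets hmn W.1 W.2
  set T1 : Lv n (m+1) := ⟨T1v, hc1⟩ with hT1
  set T2 : Lv n (m+1) := ⟨T2v, hc2⟩ with hT2
  have hne' : T1 ≠ T2 := fun h => hne (congrArg Subtype.val h)
  have hA := lemA (T := T1) hbc W.2 hne' h1 h2 h1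
  refine ⟨⟨(b T1).1 ∩ (b T2).1, hA.1⟩, fun T => ⟨fun hWT => (lemA (T := T) hbc W.2 hne' h1 h2 hWT).2,
    fun h => ?_⟩⟩
  have hbc' := hbc.symm'
  have hbne' : b T1 ≠ b T2 := fun hh => hne' (b.injective hh)
  have hA' := lemA (T := b T) hbc' hA.1 hbne' Finset.inter_subset_left
    Finset.inter_subset_right h
  simp only [Equiv.symm_apply_apply] at hA'
  have hfin : T1.1 ∩ T2.1 = W.1 := inter_of_sup W.2 hc1 hc2 h1 h2 hne
  exact hfin ▸ hA'.2

lemma step {n m : ℕ} (hmn : m + 2 ≤ n) {b : Lv n (m+1) ≃ Lv n (m+1)}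
    {c : Lv n (m+2) ≃ Lv n (m+2)} (hbc : Compat b c) :
    ∃ a : Lv n m ≃ Lv n m, Compat a b := by
  choose a ha using fun W => step_key hmn hbc W
  have hinj : Function.Injective a := by
    intro W W' h
    obtain ⟨T1v, T2v, hne, hc1, hc2, h1, h2⟩ := two_supersets hmn W.1 W.2
    have e1 : W'.1 ⊆ T1v := (ha W' ⟨T1v, hc1⟩).2 (by rw [← h]; exact (ha W ⟨T1v, hc1⟩).1 h1)
    have e2 : W'.1 ⊆ T2v := (ha W' ⟨T2v, hc2⟩).2 (by rw [← h]; exact (ha W ⟨T2v, hc2⟩).1 h2)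
    have : W'.1 ⊆ W.1 := by
      rw [← inter_of_sup W.2 hc1 hc2 h1 h2 hne]
      exact Finset.subset_inter e1 e2
    exact (Subtype.ext (Finset.eq_of_subset_of_card_le this (by rw [W.2, W'.2]))).symm
  exact ⟨Equiv.ofBijective a (Finite.injective_iff_bijective.1 hinj), fun T S => ha T S⟩

theorem rigidity {n : ℕ} (m : ℕ) : m + 1 ≤ n →
    ∀ (b : Lv n m ≃ Lv n m) (c : Lv n (m+1) ≃ Lv n (m+1)), Compat b c →
    ∃ σ : Equiv.Perm (Fin n),
      (∀ T : Lv n m, (b T).1 = T.1.image σ) ∧ (∀ S : Lv n (m+1), (c S).1 = S.1.image σ) := by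
  induction m with
  | zero =>
    intro _ b c hbc
    have hu : ∀ S : Lv n 1, ∃ y, S.1 = {y} := fun S => Finset.card_eq_one.1 S.2
    choose u hu using hu
    have hσinj : Function.Injective
        (fun y => u (c ⟨{y}, Finset.card_singleton y⟩)) := by
      intro y y' h
      have : c ⟨{y}, Finset.card_singleton y⟩ = c ⟨{y'}, Finset.card_singleton y'⟩ := by
        apply Subtype.ext
        rw [hu (c ⟨{y}, Finset.card_singleton y⟩), hu (c ⟨{y'}, Finset.card_singleton y'⟩)]
        exact congrArg (fun t => ({t} : Finset (Fin n))) h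
      have := c.injective this
      simpa using congrArg Subtype.val this
    refine ⟨Equiv.ofBijective _ (Finite.injective_iff_bijective.1 hσinj), fun T => ?_, fun S => ?_⟩
    · have hT : T.1 = ∅ := Finset.card_eq_zero.1 T.2
      have hbT : (b T).1 = ∅ := Finset.card_eq_zero.1 (b T).2
      rw [hT, hbT, Finset.image_empty]
    · obtain ⟨y, hy⟩ := Finset.card_eq_one.1 S.2
      have hS : S = ⟨{y}, Finset.card_singleton y⟩ := Subtype.ext hy
      rw [hS]
      rw [Finset.image_singleton]
      exact hu _
  | succ m ih =>
    intro hm b c hbc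
    obtain ⟨a, hab⟩ := step hm hbc
    obtain ⟨σ, _, hB⟩ := ih (by omega) a b hab
    refine ⟨σ, hB, fun S => ?_⟩
    have him : S.1.image σ ⊆ (c S).1 := by
      intro x hx
      obtain ⟨y, hyS, rfl⟩ := Finset.mem_image.1 hx
      obtain ⟨z, hzS, hzy⟩ := Finset.exists_mem_ne (by rw [S.2]; omega) y
      set T : Lv n (m+1) := ⟨S.1.erase z, by rw [Finset.card_erase_of_mem hzS, S.2]; omega⟩
      have hTS : T.1 ⊆ S.1 := Finset.erase_subset _ _
      have h1 : (b T).1 ⊆ (c S).1 := (hbc T S).1 hTS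
      have h2 : σ y ∈ (b T).1 := by
        rw [hB T]
        exact Finset.mem_image_of_mem _ (Finset.mem_erase.2 ⟨fun h => hzy h.symm, hyS⟩)
      exact h1 h2
    exact (Finset.eq_of_subset_of_card_le him
      (by rw [Finset.card_image_of_injective _ σ.injective, S.2, (c S).2])).symm

lemma below_unique {n m : ℕ} (hmn : m + 2 ≤ n) {C : Lv n m ≃ Lv n m}
    {B : Lv n (m+1) ≃ Lv n (m+1)} (hCB : Compat C B) (σ : Equiv.Perm (Fin n))
    (hB : ∀ T : Lv n (m+1), (B T).1 = T.1.image σ) :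
    ∀ U : Lv n m, (C U).1 = U.1.image σ := by
  intro U
  obtain ⟨T1v, T2v, hne, hc1, hc2, h1, h2⟩ := two_supersets hmn U.1 U.2
  have e1 : (C U).1 ⊆ T1v.image σ := by rw [← hB ⟨T1v, hc1⟩]; exact (hCB U ⟨T1v, hc1⟩).1 h1
  have e2 : (C U).1 ⊆ T2v.image σ := by rw [← hB ⟨T2v, hc2⟩]; exact (hCB U ⟨T2v, hc2⟩).1 h2
  have hsub : (C U).1 ⊆ U.1.image σ := by
    rw [← inter_of_sup U.2 hc1 hc2 h1 h2 hne, Finset.image_inter _ _ σ.injective]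
    exact Finset.subset_inter e1 e2
  exact Finset.eq_of_subset_of_card_le hsub
    (by rw [Finset.card_image_of_injective _ σ.injective, U.2, (C U).2])
open scoped symmDiff

-- the three-layer model graph
abbrev Vt (n a : ℕ) := Lv n (a+2) ⊕ ((ZMod 2 × Lv n (a+1)) ⊕ Lv n a)

variable {n a : ℕ}

@[reducible] def vS (S : Lv n (a+2)) : Vt n a := Sum.inl S
@[reducible] def vM (i : ZMod 2) (T : Lv n (a+1)) : Vt n a := Sum.inr (Sum.inl (i, T))
@[reducible] def vU (U : Lv n a) : Vt n a := Sum.inr (Sum.inr U)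

def HAdj (n a : ℕ) : Vt n a → Vt n a → Prop
  | Sum.inl S, Sum.inr (Sum.inl (_, T)) => T.1 ⊆ S.1
  | Sum.inr (Sum.inl (_, T)), Sum.inl S => T.1 ⊆ S.1
  | Sum.inr (Sum.inl (_, T)), Sum.inr (Sum.inr U) => U.1 ⊆ T.1
  | Sum.inr (Sum.inr U), Sum.inr (Sum.inl (_, T)) => U.1 ⊆ T.1
  | _, _ => False

def Hg (n a : ℕ) : SimpleGraph (Vt n a) where
  Adj := HAdj n a
  symm := by constructor; rintro (S | ⟨⟨i, T⟩ | U⟩) (S' | ⟨⟨i', T'⟩ | U'⟩) h <;> exact h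
  loopless := by constructor; rintro (S | ⟨⟨i, T⟩ | U⟩) h <;> exact h

@[simp] lemma hg_SS (S S' : Lv n (a+2)) : (Hg n a).Adj (vS S) (vS S') ↔ False := Iff.rfl
@[simp] lemma hg_SM (S : Lv n (a+2)) (i : ZMod 2) (T : Lv n (a+1)) :
    (Hg n a).Adj (vS S) (vM i T) ↔ T.1 ⊆ S.1 := Iff.rfl
@[simp] lemma hg_SU (S : Lv n (a+2)) (U : Lv n a) : (Hg n a).Adj (vS S) (vU U) ↔ False := Iff.rfl
@[simp] lemma hg_MS (S : Lv n (a+2)) (i : ZMod 2) (T : Lv n (a+1)) :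
    (Hg n a).Adj (vM i T) (vS S) ↔ T.1 ⊆ S.1 := Iff.rfl
@[simp] lemma hg_MM (i i' : ZMod 2) (T T' : Lv n (a+1)) :
    (Hg n a).Adj (vM i T) (vM i' T') ↔ False := Iff.rfl
@[simp] lemma hg_MU (i : ZMod 2) (T : Lv n (a+1)) (U : Lv n a) :
    (Hg n a).Adj (vM i T) (vU U) ↔ U.1 ⊆ T.1 := Iff.rfl
@[simp] lemma hg_US (S : Lv n (a+2)) (U : Lv n a) : (Hg n a).Adj (vU U) (vS S) ↔ False := Iff.rfl
@[simp] lemma hg_UM (i : ZMod 2) (T : Lv n (a+1)) (U : Lv n a) :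
    (Hg n a).Adj (vU U) (vM i T) ↔ U.1 ⊆ T.1 := Iff.rfl
@[simp] lemma hg_UU (U U' : Lv n a) : (Hg n a).Adj (vU U) (vU U') ↔ False := Iff.rfl

-- toLeft/toRight of symmDiff
lemma toLeft_symmDiff {α β : Type*} [DecidableEq α] [DecidableEq β] (u v : Finset (α ⊕ β)) :
    (u ∆ v).toLeft = u.toLeft ∆ v.toLeft := by
  ext x; simp [Finset.mem_symmDiff]

lemma toRight_symmDiff {α β : Type*} [DecidableEq α] [DecidableEq β] (u v : Finset (α ⊕ β)) :
    (u ∆ v).toRight = u.toRight ∆ v.toRight := by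
  ext x; simp [Finset.mem_symmDiff]

lemma disjSum_singletons {α β : Type*} [DecidableEq α] [DecidableEq β] (i : α) (y : β) :
    ({i} : Finset α).disjSum ({y} : Finset β) = {Sum.inl i, Sum.inr y} := by
  ext x; cases x <;> simp [Finset.mem_disjSum, eq_comm]

-- adjacency in the token graph via left/right parts
lemma tg_adj_iff (A B : {A : Finset (Fin 2 ⊕ Fin n) // A.card = a + 2}) :
    (tokenGraph (completeBipartiteGraph (Fin 2) (Fin n)) (a+2)).Adj A B ↔
      ∃ (i : Fin 2) (y : Fin n),
        A.1.toLeft ∆ B.1.toLeft = {i} ∧ A.1.toRight ∆ B.1.toRight = {y} := by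
  constructor
  · rintro ⟨x, z, hxz, hsd⟩
    rcases x with i | yy <;> rcases z with ii | y <;> simp at hxz
    · refine ⟨i, y, ?_, ?_⟩
      · rw [← toLeft_symmDiff, hsd]; ext w; simp
      · rw [← toRight_symmDiff, hsd]; ext w; simp
    · refine ⟨ii, yy, ?_, ?_⟩
      · rw [← toLeft_symmDiff, hsd]; ext w; simp [or_comm]
      · rw [← toRight_symmDiff, hsd]; ext w; simp [or_comm]
  · rintro ⟨i, y, hL, hR⟩
    refine ⟨Sum.inl i, Sum.inr y, by simp, ?_⟩
    rw [← Finset.toLeft_disjSum_toRight (u := A.1 ∆ B.1), toLeft_symmDiff, toRight_symmDiff,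
      hL, hR, disjSum_singletons]

-- symmDiff singleton iff subset
lemma sd_singleton_iff {α : Type*} [DecidableEq α] {T S : Finset α}
    (h : S.card = T.card + 1) : (∃ y, T ∆ S = {y}) ↔ T ⊆ S := by
  constructor
  · rintro ⟨y, hy⟩
    have hcard : (T ∆ S).card = 1 := by rw [hy]; exact Finset.card_singleton y
    have h1 : (T ∆ S).card = (T \ S).card + (S \ T).card := by
      have he : T ∆ S = (T \ S) ∪ (S \ T) := by
        ext x; simp [Finset.mem_symmDiff]
      rw [he]
      exact Finset.card_union_of_disjoint disjoint_sdiff_sdiff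
    have h2 : (T \ S).card + (T ∩ S).card = T.card := Finset.card_sdiff_add_card_inter T S
    have h3 : (S \ T).card + (S ∩ T).card = S.card := Finset.card_sdiff_add_card_inter S T
    have h4 : (T ∩ S).card = (S ∩ T).card := by rw [Finset.inter_comm]
    have : (T \ S).card = 0 := by omega
    exact Finset.sdiff_eq_empty_iff_subset.1 (Finset.card_eq_zero.1 this)
  · intro hsub
    have heq : T ∆ S = S \ T := symmDiff_of_le hsub
    rw [heq, ← Finset.card_eq_one, Finset.card_sdiff_of_subset hsub]
    omega

lemma sd_singleton_iff' {α : Type*} [DecidableEq α] {T S : Finset α}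
    (h : S.card = T.card + 1) : (∃ y, S ∆ T = {y}) ↔ T ⊆ S := by
  rw [symmDiff_comm]; exact sd_singleton_iff h

def e2 (i : ZMod 2) : Fin 2 := if i = 0 then 0 else 1

def dec (n a : ℕ) : Vt n a → {A : Finset (Fin 2 ⊕ Fin n) // A.card = a + 2}
  | Sum.inl S => ⟨(∅ : Finset (Fin 2)).disjSum S.1, by simp [Finset.card_disjSum, S.2]⟩
  | Sum.inr (Sum.inl (i, T)) => ⟨({e2 i} : Finset (Fin 2)).disjSum T.1,
      by simp only [Finset.card_disjSum, T.2, Finset.card_singleton]; omega⟩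
  | Sum.inr (Sum.inr U) => ⟨({0, 1} : Finset (Fin 2)).disjSum U.1,
      by simp only [Finset.card_disjSum, U.2,
        show ({0,1} : Finset (Fin 2)).card = 2 by decide]; omega⟩

section decidefacts
lemma dEM : ∀ j : ZMod 2, (∅ : Finset (Fin 2)) ≠ {e2 j} := by decide
lemma dEU : (∅ : Finset (Fin 2)) ≠ {0, 1} := by decide
lemma dMU' : ∀ j : ZMod 2, ({e2 j} : Finset (Fin 2)) ≠ {0, 1} := by decide
lemma dMMinj : ∀ j j' : ZMod 2, ({e2 j} : Finset (Fin 2)) = {e2 j'} → j = j' := by decide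
lemma dsSS : ∀ i : Fin 2, (∅ : Finset (Fin 2)) ∆ ∅ ≠ {i} := by decide
lemma dsSM : ∀ j : ZMod 2, (∅ : Finset (Fin 2)) ∆ {e2 j} = {e2 j} := by decide
lemma dsMS : ∀ j : ZMod 2, ({e2 j} : Finset (Fin 2)) ∆ ∅ = {e2 j} := by decide
lemma dsSU : ∀ i : Fin 2, (∅ : Finset (Fin 2)) ∆ {0,1} ≠ {i} := by decide
lemma dsUS : ∀ i : Fin 2, ({0,1} : Finset (Fin 2)) ∆ ∅ ≠ {i} := by decide
lemma dsMM : ∀ j j' : ZMod 2, ∀ i : Fin 2, ({e2 j} : Finset (Fin 2)) ∆ {e2 j'} ≠ {i} := by decide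
lemma dsMU : ∀ j : ZMod 2, ∃ i : Fin 2, ({e2 j} : Finset (Fin 2)) ∆ {0,1} = {i} := by decide
lemma dsUM : ∀ j : ZMod 2, ∃ i : Fin 2, ({0,1} : Finset (Fin 2)) ∆ {e2 j} = {i} := by decide
lemma dsUU : ∀ i : Fin 2, ({0,1} : Finset (Fin 2)) ∆ {0,1} ≠ {i} := by decide
end decidefacts

lemma dec_bij : Function.Bijective (dec n a) := by
  constructor
  · rintro (S | ⟨⟨i, T⟩ | U⟩) (S' | ⟨⟨i', T'⟩ | U'⟩) h <;>
      simp only [dec, Subtype.mk.injEq, Finset.disjSum_inj] at h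
    · exact congrArg vS (Subtype.ext h.2)
    · exact absurd h.1 (dEM i')
    · exact absurd h.1 dEU
    · exact absurd h.1.symm (dEM i)
    · rw [dMMinj _ _ h.1]
      exact congrArg (vM i') (Subtype.ext h.2)
    · exact absurd h.1 (dMU' i)
    · exact absurd h.1.symm dEU
    · exact absurd h.1.symm (dMU' i')
    · exact congrArg vU (Subtype.ext h.2)
  · rintro ⟨A, hA⟩
    have hsplit : A.toLeft.card + A.toRight.card = a + 2 := by
      rw [Finset.card_toLeft_add_card_toRight, hA]
    rcases (by decide : ∀ X : Finset (Fin 2), X = ∅ ∨ X = {0} ∨ X = {1} ∨ X = {0,1}) A.toLeft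
      with hX | hX | hX | hX
    · refine ⟨vS ⟨A.toRight, ?_⟩, ?_⟩
      · rw [hX] at hsplit; simpa using hsplit
      · apply Subtype.ext
        show Finset.disjSum _ _ = A
        have hh : A = Finset.disjSum A.toLeft A.toRight := Finset.toLeft_disjSum_toRight.symm
        rw [hX] at hh
        exact hh.symm
    · refine ⟨vM 0 ⟨A.toRight, ?_⟩, ?_⟩
      · rw [hX] at hsplit; simp at hsplit; omega
      · apply Subtype.ext
        show Finset.disjSum {e2 0} _ = A
        have hh : A = Finset.disjSum A.toLeft A.toRight := Finset.toLeft_disjSum_toRight.symm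
        rw [hX] at hh
        rw [show ({e2 0} : Finset (Fin 2)) = {0} from by decide]
        exact hh.symm
    · refine ⟨vM 1 ⟨A.toRight, ?_⟩, ?_⟩
      · rw [hX] at hsplit; simp at hsplit; omega
      · apply Subtype.ext
        show Finset.disjSum {e2 1} _ = A
        have hh : A = Finset.disjSum A.toLeft A.toRight := Finset.toLeft_disjSum_toRight.symm
        rw [hX] at hh
        rw [show ({e2 1} : Finset (Fin 2)) = {1} from by decide]
        exact hh.symm
    · refine ⟨vU ⟨A.toRight, ?_⟩, ?_⟩
      · rw [hX] at hsplit
        rw [show ({0,1} : Finset (Fin 2)).card = 2 from by decide] at hsplit; omega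
      · apply Subtype.ext
        show Finset.disjSum {0, 1} _ = A
        have hh : A = Finset.disjSum A.toLeft A.toRight := Finset.toLeft_disjSum_toRight.symm
        rw [hX] at hh
        exact hh.symm

lemma dec_adj (v w : Vt n a) :
    (tokenGraph (completeBipartiteGraph (Fin 2) (Fin n)) (a+2)).Adj (dec n a v) (dec n a w) ↔
      (Hg n a).Adj v w := by
  rw [tg_adj_iff]
  rcases v with S | ⟨⟨i, T⟩ | U⟩ <;> rcases w with S' | ⟨⟨i', T'⟩ | U'⟩ <;>
    simp only [dec, Finset.toLeft_disjSum, Finset.toRight_disjSum, hg_SS, hg_SM, hg_SU,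
      hg_MS, hg_MM, hg_MU, hg_US, hg_UM, hg_UU, iff_false]
  · rintro ⟨i, y, h1, _⟩; exact dsSS i h1
  · constructor
    · rintro ⟨i, y, _, h2⟩
      exact (sd_singleton_iff' (by rw [S.2, T'.2])).1 ⟨y, h2⟩
    · intro hsub
      obtain ⟨y, hy⟩ := (sd_singleton_iff' (T := T'.1) (S := S.1) (by rw [S.2, T'.2])).2 hsub
      exact ⟨e2 i', y, dsSM i', hy⟩
  · rintro ⟨i, y, h1, _⟩; exact dsSU i h1
  · constructor
    · rintro ⟨i, y, _, h2⟩
      exact (sd_singleton_iff (by rw [S'.2, T.2])).1 ⟨y, h2⟩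
    · intro hsub
      obtain ⟨y, hy⟩ := (sd_singleton_iff (T := T.1) (S := S'.1) (by rw [S'.2, T.2])).2 hsub
      exact ⟨e2 i, y, dsMS i, hy⟩
  · rintro ⟨j, y, h1, _⟩; exact dsMM i i' j h1
  · constructor
    · rintro ⟨j, y, _, h2⟩
      exact (sd_singleton_iff' (by rw [T.2, U'.2])).1 ⟨y, h2⟩
    · intro hsub
      obtain ⟨y, hy⟩ := (sd_singleton_iff' (T := U'.1) (S := T.1) (by rw [T.2, U'.2])).2 hsub
      obtain ⟨j, hj⟩ := dsMU i
      exact ⟨j, y, hj, hy⟩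
  · rintro ⟨i, y, h1, _⟩; exact dsUS i h1
  · constructor
    · rintro ⟨j, y, _, h2⟩
      exact (sd_singleton_iff (by rw [T'.2, U.2])).1 ⟨y, h2⟩
    · intro hsub
      obtain ⟨y, hy⟩ := (sd_singleton_iff (T := U.1) (S := T'.1) (by rw [T'.2, U.2])).2 hsub
      obtain ⟨j, hj⟩ := dsUM i'
      exact ⟨j, y, hj, hy⟩
  · rintro ⟨i, y, h1, _⟩; exact dsUU i h1

noncomputable def decIso :
    Hg n a ≃g tokenGraph (completeBipartiteGraph (Fin 2) (Fin n)) (a+2) :=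
  ⟨Equiv.ofBijective (dec n a) dec_bij, by apply dec_adj⟩
variable {n a : ℕ}

noncomputable def nbrCard (v : Vt n a) : ℕ := Nat.card {w : Vt n a // (Hg n a).Adj v w}

lemma iso_nbrCard (φ : Hg n a ≃g Hg n a) (v : Vt n a) : nbrCard (φ v) = nbrCard v :=
  (Nat.card_congr (Equiv.subtypeEquiv φ.toEquiv (fun w => φ.map_rel_iff.symm))).symm

lemma nbr_inl (S : Lv n (a+2)) : nbrCard (n := n) (a := a) (vS S) = 2 * (a + 2) := by
  have hF : Function.Bijective (fun p : ZMod 2 × {T : Finset (Fin n) // T ∈ S.1.powersetCard (a+1)} =>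
      (⟨vM p.1 ⟨p.2.1, (Finset.mem_powersetCard.1 p.2.2).2⟩,
      (hg_SM _ _ _).2 (Finset.mem_powersetCard.1 p.2.2).1⟩ : {w : Vt n a // (Hg n a).Adj (vS S) w})) := by
    constructor
    · rintro ⟨i, T, hT⟩ ⟨i', T', hT'⟩ h
      simp only [vM, Subtype.mk.injEq, Sum.inr.injEq, Sum.inl.injEq, Prod.mk.injEq] at h
      exact Prod.ext h.1 (Subtype.ext h.2)
    · rintro ⟨w, hw⟩
      rcases w with S' | ⟨⟨i, T⟩ | U⟩
      · exact absurd hw (by simp)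
      · exact ⟨(i, ⟨T.1, Finset.mem_powersetCard.2 ⟨(hg_SM _ _ _).1 hw, T.2⟩⟩), rfl⟩
      · exact absurd hw (by simp)
  have := Nat.card_congr (Equiv.ofBijective _ hF)
  rw [nbrCard, ← this, Nat.card_prod, Nat.card_zmod, Nat.card_eq_fintype_card]
  rw [Fintype.card_coe, Finset.card_powersetCard, S.2, Nat.choose_succ_self_right]

lemma nbr_inr (U : Lv n a) : nbrCard (n := n) (a := a) (vU U) = 2 * (n - a) := by
  have key : ∀ D : Finset (Fin n), D ∈ U.1ᶜ.powersetCard 1 →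
      (U.1 ∪ D).card = a + 1 ∧ U.1 ⊆ U.1 ∪ D := by
    intro D hD
    obtain ⟨hsub, hcard⟩ := Finset.mem_powersetCard.1 hD
    have hdisj : Disjoint U.1 D := by
      rw [Finset.disjoint_left]
      intro x hxU hxD
      exact (Finset.mem_compl.1 (hsub hxD)) hxU
    refine ⟨?_, Finset.subset_union_left⟩
    rw [Finset.card_union_of_disjoint hdisj, U.2, hcard]
  have hF : Function.Bijective (fun p : ZMod 2 × {D : Finset (Fin n) // D ∈ U.1ᶜ.powersetCard 1} =>
      (⟨vM p.1 ⟨U.1 ∪ p.2.1, (key p.2.1 p.2.2).1⟩,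
      (hg_UM _ _ _).2 (key p.2.1 p.2.2).2⟩ : {w : Vt n a // (Hg n a).Adj (vU U) w})) := by
    constructor
    · rintro ⟨i, D, hD⟩ ⟨i', D', hD'⟩ h
      simp only [vM, Subtype.mk.injEq, Sum.inr.injEq, Sum.inl.injEq, Prod.mk.injEq] at h
      refine Prod.ext h.1 (Subtype.ext ?_)
      show D = D'
      have hd : Disjoint U.1 D := by
        rw [Finset.disjoint_left]
        intro x hxU hxD
        exact (Finset.mem_compl.1 ((Finset.mem_powersetCard.1 hD).1 hxD)) hxU
      have hd' : Disjoint U.1 D' := by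
        rw [Finset.disjoint_left]
        intro x hxU hxD
        exact (Finset.mem_compl.1 ((Finset.mem_powersetCard.1 hD').1 hxD)) hxU
      rw [← Finset.union_sdiff_cancel_left hd, ← Finset.union_sdiff_cancel_left hd', h.2]
    · rintro ⟨w, hw⟩
      rcases w with S' | ⟨⟨i, T⟩ | U'⟩
      · exact absurd hw (by simp)
      · have hsub : U.1 ⊆ T.1 := (hg_UM _ _ _).1 hw
        have hmem : T.1 \ U.1 ∈ U.1ᶜ.powersetCard 1 := by
          rw [Finset.mem_powersetCard]
          constructor
          · intro x hx
            exact Finset.mem_compl.2 (Finset.mem_sdiff.1 hx).2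
          · rw [Finset.card_sdiff_of_subset hsub, T.2, U.2]
            omega
        refine ⟨(i, ⟨T.1 \ U.1, hmem⟩), ?_⟩
        dsimp only
        congr 2
        apply Subtype.ext
        exact Finset.union_sdiff_of_subset hsub
      · exact absurd hw (by simp)
  have := Nat.card_congr (Equiv.ofBijective _ hF)
  rw [nbrCard, ← this, Nat.card_prod, Nat.card_zmod, Nat.card_eq_fintype_card]
  rw [Fintype.card_coe, Finset.card_powersetCard, Finset.card_compl, U.2, Fintype.card_fin,
    Nat.choose_one_right]

-- twins
def Tw (v w : Vt n a) : Prop := v ≠ w ∧ ∀ u, (Hg n a).Adj v u ↔ (Hg n a).Adj w u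

lemma Tw.symm2 {v w : Vt n a} (h : Tw v w) : Tw w v :=
  ⟨h.1.symm, fun u => (h.2 u).symm⟩

lemma tw_map (φ : Hg n a ≃g Hg n a) {v w : Vt n a} (h : Tw v w) : Tw (φ v) (φ w) := by
  refine ⟨fun e => h.1 (φ.toEquiv.injective e), fun u => ?_⟩
  have hv : (Hg n a).Adj (φ v) u ↔ (Hg n a).Adj v (φ.symm u) := by
    conv_lhs => rw [show u = φ (φ.symm u) from (φ.toEquiv.apply_symm_apply u).symm]
    exact φ.map_rel_iff
  have hw : (Hg n a).Adj (φ w) u ↔ (Hg n a).Adj w (φ.symm u) := by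
    conv_lhs => rw [show u = φ (φ.symm u) from (φ.toEquiv.apply_symm_apply u).symm]
    exact φ.map_rel_iff
  rw [hv, hw]
  exact h.2 _

lemma tw_mid (i : ZMod 2) (T : Lv n (a+1)) : Tw (n := n) (a := a) (vM i T) (vM (i+1) T) := by
  refine ⟨?_, fun u => ?_⟩
  · intro h
    simp only [vM, Sum.inr.injEq, Sum.inl.injEq, Prod.mk.injEq] at h
    exact (by decide : ∀ i : ZMod 2, ¬(i = i + 1)) i h.1
  · rcases u with S' | ⟨⟨i', T'⟩ | U'⟩ <;> exact Iff.rfl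
lemma mem_not_mem_of_ne {n : ℕ} {s t : Finset (Fin n)} (hc : s.card = t.card) (h : s ≠ t) :
    ∃ x ∈ s, x ∉ t := by
  by_contra hx
  push_neg at hx
  exact h (Finset.eq_of_subset_of_card_le hx (le_of_eq hc.symm))

lemma compl_pick {n : ℕ} (s : Finset (Fin n)) (h : s.card + 1 ≤ n) : ∃ x, x ∉ s := by
  obtain ⟨x, hx⟩ := Finset.card_pos.1
    (show 0 < sᶜ.card by rw [Finset.card_compl, Fintype.card_fin]; omega)
  exact ⟨x, Finset.mem_compl.1 hx⟩

lemma no_twin_S {n a : ℕ} (hn3 : 3 ≤ n) (han : a + 2 ≤ n) (S : Lv n (a+2)) (w : Vt n a)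
    (h : Tw (vS S) w) : False := by
  rcases w with S' | ⟨⟨i', T'⟩ | U'⟩
  · have hne : S.1 ≠ S'.1 := fun e => h.1 (congrArg vS (Subtype.ext e))
    obtain ⟨x, hxS, hxS'⟩ := mem_not_mem_of_ne (by rw [S.2, S'.2]) hne
    obtain ⟨z, hzS, hzx⟩ := Finset.exists_mem_ne (by rw [S.2]; omega) x
    set T : Lv n (a+1) := ⟨S.1.erase z, by rw [Finset.card_erase_of_mem hzS, S.2]; omega⟩ with hT
    
    have h1 : T.1 ⊆ S'.1 := (hg_SM S' 0 T).1 ((h.2 (vM 0 T)).1 ((hg_SM S 0 T).2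
      (Finset.erase_subset _ _)))
    exact hxS' (h1 (Finset.mem_erase.2 ⟨fun e => hzx e.symm, hxS⟩))
  · obtain ⟨V, hVsub, hVcard⟩ := Finset.exists_subset_card_eq
      (show a ≤ T'.1.card by rw [T'.2]; omega)
    exact (hg_SU S ⟨V, hVcard⟩).1 ((h.2 (vU ⟨V, hVcard⟩)).2 ((hg_MU i' T' ⟨V, hVcard⟩).2 hVsub))
  · have key : ∀ T : Lv n (a+1), (T.1 ⊆ S.1 ↔ U'.1 ⊆ T.1) := fun T =>
      ⟨fun hs => (hg_UM _ _ _).1 ((h.2 (vM 0 T)).1 ((hg_SM _ _ _).2 hs)),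
       fun hs => (hg_SM _ _ _).1 ((h.2 (vM 0 T)).2 ((hg_UM _ _ _).2 hs))⟩
    by_cases hU : U'.1 ⊆ S.1
    · by_cases hcase : n = a + 2
      · have hSuniv : S.1 = Finset.univ :=
          Finset.eq_univ_of_card _ (by rw [S.2, Fintype.card_fin]; omega)
        have ha : 1 ≤ a := by omega
        obtain ⟨u0, hu0⟩ : U'.1.Nonempty := Finset.card_pos.1 (by rw [U'.2]; omega)
        set T : Lv n (a+1) := ⟨Finset.univ.erase u0,
          by rw [Finset.card_erase_of_mem (Finset.mem_univ u0), Finset.card_univ,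
            Fintype.card_fin]; omega⟩ with hTdef
        have h1 : U'.1 ⊆ T.1 := (key T).1 (by rw [hSuniv]; exact Finset.subset_univ _)
        exact (Finset.notMem_erase u0 _) (h1 hu0)
      · obtain ⟨x, hx⟩ := compl_pick S.1 (by rw [S.2]; omega)
        have hxU : x ∉ U'.1 := fun hh => hx (hU hh)
        set T : Lv n (a+1) := ⟨insert x U'.1,
          by rw [Finset.card_insert_of_notMem hxU, U'.2]⟩ with hTdef
        have h1 : T.1 ⊆ S.1 := (key T).2 (Finset.subset_insert _ _)
        exact hx (h1 (Finset.mem_insert_self x _))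
    · obtain ⟨V, hVsub, hVcard⟩ := Finset.exists_subset_card_eq
        (show a + 1 ≤ S.1.card by rw [S.2]; omega)
      exact hU (((key ⟨V, hVcard⟩).1 hVsub).trans hVsub)

lemma no_twin_U {n a : ℕ} (hn3 : 3 ≤ n) (han : a + 2 ≤ n) (U : Lv n a) (w : Vt n a)
    (h : Tw (vU U) w) : False := by
  rcases w with S' | ⟨⟨i', T'⟩ | U'⟩
  · exact no_twin_S hn3 han S' _ h.symm2
  · obtain ⟨Sv, hSsub, hScard⟩ := Finset.exists_superset_card_eq
      (show T'.1.card ≤ a + 2 by rw [T'.2]; omega)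
      (by rw [Fintype.card_fin]; exact han)
    exact (hg_US ⟨Sv, hScard⟩ U).1 ((h.2 (vS ⟨Sv, hScard⟩)).2 ((hg_MS ⟨Sv, hScard⟩ i' T').2 hSsub))
  · have hne : U.1 ≠ U'.1 := fun e => h.1 (congrArg vU (Subtype.ext e))
    obtain ⟨x, hxU, hxU'⟩ := mem_not_mem_of_ne (by rw [U.2, U'.2]) hne
    obtain ⟨y, hy⟩ := compl_pick (insert x U'.1)
      (by rw [Finset.card_insert_of_notMem hxU', U'.2]; omega)
    have hyU' : y ∉ U'.1 := fun hh => hy (Finset.mem_insert_of_mem hh)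
    have hyx : y ≠ x := fun e => hy (by rw [e]; exact Finset.mem_insert_self x _)
    set T : Lv n (a+1) := ⟨insert y U'.1,
      by rw [Finset.card_insert_of_notMem hyU', U'.2]⟩ with hTdef
    have h1 : U.1 ⊆ T.1 := (hg_UM _ _ _).1 ((h.2 (vM 0 T)).2 ((hg_UM _ _ _).2
      (Finset.subset_insert _ _)))
    rcases Finset.mem_insert.1 (h1 hxU) with e | e
    · exact hyx e.symm
    · exact hxU' e

lemma twin_mid_T {n a : ℕ} (hn3 : 3 ≤ n) (han : a + 2 ≤ n) {i i' : ZMod 2}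
    {T T' : Lv n (a+1)} (h : Tw (vM i T) (vM i' T')) : T = T' := by
  by_contra hne
  have hv : T.1 ≠ T'.1 := fun e => hne (Subtype.ext e)
  obtain ⟨ww, hwT', hwT⟩ := mem_not_mem_of_ne (by rw [T.2, T'.2]) hv.symm
  by_cases hcase : n = a + 2
  · have ha : 1 ≤ a := by omega
    obtain ⟨z1, hz1, z2, hz2, hz12⟩ := Finset.one_lt_card.1
      (show 1 < T.1.card by rw [T.2]; omega)
    have hU1 : (T.1.erase z1).card = a := by rw [Finset.card_erase_of_mem hz1, T.2]; omega
    have hU2 : (T.1.erase z2).card = a := by rw [Finset.card_erase_of_mem hz2, T.2]; omega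
    have k1 : T.1.erase z1 ⊆ T'.1 := (hg_MU _ _ _).1 ((h.2 (vU ⟨T.1.erase z1, hU1⟩)).1
      ((hg_MU _ _ _).2 (Finset.erase_subset _ _)))
    have k2 : T.1.erase z2 ⊆ T'.1 := (hg_MU _ _ _).1 ((h.2 (vU ⟨T.1.erase z2, hU2⟩)).1
      ((hg_MU _ _ _).2 (Finset.erase_subset _ _)))
    have hsub : T.1 ⊆ T'.1 := by
      intro x hx
      by_cases hxz : x = z1
      · exact k2 (Finset.mem_erase.2 ⟨hxz ▸ hz12, hx⟩)
      · exact k1 (Finset.mem_erase.2 ⟨hxz, hx⟩)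
    exact hv (Finset.eq_of_subset_of_card_le hsub (by rw [T.2, T'.2]))
  · obtain ⟨y, hy⟩ := compl_pick (insert ww T.1)
      (by rw [Finset.card_insert_of_notMem hwT, T.2]; omega)
    have hyT : y ∉ T.1 := fun hh => hy (Finset.mem_insert_of_mem hh)
    have hyw : y ≠ ww := fun e => hy (by rw [e]; exact Finset.mem_insert_self ww _)
    set S : Lv n (a+2) := ⟨insert y T.1,
      by rw [Finset.card_insert_of_notMem hyT, T.2]⟩ with hSdef
    have h1 : T'.1 ⊆ S.1 := (hg_MS _ _ _).1 ((h.2 (vS S)).1 ((hg_MS _ _ _).2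
      (Finset.subset_insert _ _)))
    rcases Finset.mem_insert.1 (h1 hwT') with e | e
    · exact hyw e.symm
    · exact hwT e
section homsec
variable {n a : ℕ}

lemma permSubsets_val {j : ℕ} (σ : Equiv.Perm (Fin n)) (T : Lv n j) :
    (permSubsets n j σ T).1 = T.1.image σ := rfl

lemma permSubsets_comp {j : ℕ} (σ τ : Equiv.Perm (Fin n)) (T : Lv n j) :
    permSubsets n j σ (permSubsets n j τ T) = permSubsets n j (σ * τ) T := by
  apply Subtype.ext
  simp only [permSubsets_val, Finset.image_image]
  rfl

lemma permSubsets_one {j : ℕ} (T : Lv n j) : permSubsets n j 1 T = T := by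
  apply Subtype.ext
  simp [permSubsets_val]

lemma permSubsets_cancel {j : ℕ} (σ : Equiv.Perm (Fin n)) (T : Lv n j) :
    permSubsets n j σ⁻¹ (permSubsets n j σ T) = T := by
  rw [permSubsets_comp, inv_mul_cancel, permSubsets_one]

lemma permSubsets_cancel' {j : ℕ} (σ : Equiv.Perm (Fin n)) (T : Lv n j) :
    permSubsets n j σ (permSubsets n j σ⁻¹ T) = T := by
  rw [permSubsets_comp, mul_inv_cancel, permSubsets_one]

lemma permSubsets_subset {j j' : ℕ} (σ : Equiv.Perm (Fin n)) (T : Lv n j) (S : Lv n j') :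
    (permSubsets n j σ T).1 ⊆ (permSubsets n j' σ S).1 ↔ T.1 ⊆ S.1 := by
  simp only [permSubsets_val]
  exact Finset.image_subset_image_iff σ.injective

abbrev Wgp (n a : ℕ) :=
  ({S : Finset (Fin n) // S.card = a + 1} → Multiplicative (ZMod 2))
    ⋊[wreathAction n (a+1)] Equiv.Perm (Fin n)

def wmap (f : Lv n (a+1) → Multiplicative (ZMod 2)) (σ : Equiv.Perm (Fin n)) :
    Vt n a → Vt n a
  | Sum.inl S => vS (permSubsets n (a+2) σ S)
  | Sum.inr (Sum.inl (i, T)) =>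
      vM (i + (f (permSubsets n (a+1) σ T)).toAdd) (permSubsets n (a+1) σ T)
  | Sum.inr (Sum.inr U) => vU (permSubsets n a σ U)

lemma z2add (x : ZMod 2) : x + x = 0 := by revert x; decide

def wequiv (f : Lv n (a+1) → Multiplicative (ZMod 2)) (σ : Equiv.Perm (Fin n)) :
    Vt n a ≃ Vt n a where
  toFun := wmap f σ
  invFun := wmap (fun T => f (permSubsets n (a+1) σ T)) σ⁻¹
  left_inv := by
    rintro (S | ⟨⟨i, T⟩ | U⟩) <;> simp only [wmap]
    · rw [permSubsets_cancel]
    · rw [permSubsets_cancel', permSubsets_cancel, add_assoc, z2add, add_zero]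
    · rw [permSubsets_cancel]
  right_inv := by
    rintro (S | ⟨⟨i, T⟩ | U⟩) <;> simp only [wmap]
    · rw [permSubsets_cancel']
    · rw [permSubsets_cancel', add_assoc, z2add, add_zero]
    · rw [permSubsets_cancel']

def wiso (f : Lv n (a+1) → Multiplicative (ZMod 2)) (σ : Equiv.Perm (Fin n)) :
    Hg n a ≃g Hg n a where
  toEquiv := wequiv f σ
  map_rel_iff' := by
    rintro (S | ⟨⟨i, T⟩ | U⟩) (S' | ⟨⟨i', T'⟩ | U'⟩) <;>
      simp only [wequiv, Equiv.coe_fn_mk, wmap, hg_SS, hg_SM, hg_SU, hg_MS, hg_MM, hg_MU,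
        hg_US, hg_UM, hg_UU]
    · exact permSubsets_subset σ T' S
    · exact permSubsets_subset σ T S'
    · exact permSubsets_subset σ U' T
    · exact permSubsets_subset σ U T'

def Psi (n a : ℕ) : Wgp n a →* (Hg n a ≃g Hg n a) where
  toFun w := wiso w.left w.right
  map_one' := by
    apply RelIso.ext
    rintro (S | ⟨⟨i, T⟩ | U⟩) <;>
      simp only [wiso, wequiv, SemidirectProduct.one_left, SemidirectProduct.one_right,
        RelIso.coe_fn_mk, Equiv.coe_fn_mk, wmap, permSubsets_one, Pi.one_apply, toAdd_one,
        add_zero, RelIso.coe_one, id_eq]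
  map_mul' := by
    intro x y
    apply RelIso.ext
    rintro (S | ⟨⟨i, T⟩ | U⟩) <;>
      simp only [wiso, wequiv, SemidirectProduct.mul_left, SemidirectProduct.mul_right,
        RelIso.coe_fn_mk, Equiv.coe_fn_mk, RelIso.mul_apply, wmap, ← permSubsets_comp]
    all_goals try rfl
    have hwr : (wreathAction n (a+1) x.right y.left)
            (permSubsets n (a+1) x.right (permSubsets n (a+1) y.right T))
          = y.left (permSubsets n (a+1) y.right T) := by
      show y.left (permSubsets n (a+1) x.right⁻¹ _) = _
      rw [permSubsets_cancel]
    rw [Pi.mul_apply, toAdd_mul, hwr]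
    exact congrArg (fun z : ZMod 2 => Sum.inr (Sum.inl (z,
      permSubsets n (a+1) x.right (permSubsets n (a+1) y.right T)))) (by abel)
lemma psi_inj {n a : ℕ} (han : a + 2 ≤ n) : Function.Injective (Psi n a) := by
  apply (injective_iff_map_eq_one (Psi n a)).2
  intro w hw
  have hv : ∀ v : Vt n a, (Psi n a w) v = v := fun v => by rw [hw]; rfl
  have hmid : ∀ (i : ZMod 2) (T : Lv n (a+1)),
      vM (i + (w.left (permSubsets n (a+1) w.right T)).toAdd)
        (permSubsets n (a+1) w.right T) = vM i T := fun i T => hv (vM i T)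
  have hT : ∀ T : Lv n (a+1), permSubsets n (a+1) w.right T = T := by
    intro T
    have := hmid 0 T
    simp only [vM, Sum.inr.injEq, Sum.inl.injEq, Prod.mk.injEq] at this
    exact this.2
  have hσ : w.right = 1 := by
    apply Equiv.ext
    intro y
    rw [Equiv.Perm.one_apply]
    by_contra hy
    have hcard : a ≤ ((Finset.univ : Finset (Fin n)) \ {y, w.right y}).card := by
      rw [Finset.card_sdiff_of_subset (Finset.subset_univ _), Finset.card_univ, Fintype.card_fin]
      have : ({y, w.right y} : Finset (Fin n)).card ≤ 2 := Finset.card_insert_le _ _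
      omega
    obtain ⟨V, hVsub, hVcard⟩ := Finset.exists_subset_card_eq hcard
    have hyV : y ∉ V := fun hh => by
      have := hVsub hh
      simp at this
    set T : Lv n (a+1) := ⟨insert y V, by rw [Finset.card_insert_of_notMem hyV, hVcard]⟩
    have h1 : (permSubsets n (a+1) w.right T).1 = T.1 := congrArg Subtype.val (hT T)
    have h2 : w.right y ∈ T.1 := by
      rw [← h1, permSubsets_val]
      exact Finset.mem_image_of_mem _ (Finset.mem_insert_self y V)
    rcases Finset.mem_insert.1 h2 with e | e
    · exact hy e
    · have := hVsub e
      simp at this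
  have hf : w.left = 1 := by
    funext T
    have := hmid 0 T
    rw [hT T] at this
    simp only [vM, Sum.inr.injEq, Sum.inl.injEq, Prod.mk.injEq, zero_add] at this
    have h0 : (w.left T).toAdd = 0 := this.1
    have : (w.left T).toAdd = (1 : Multiplicative (ZMod 2)).toAdd := by rw [h0, toAdd_one]
    exact Multiplicative.toAdd.injective this
  have : w = ⟨w.left, w.right⟩ := rfl
  rw [this, hf, hσ]
  rfl

noncomputable def autCongr {V W : Type*} {G : SimpleGraph V} {H : SimpleGraph W}
    (e : G ≃g H) : (G ≃g G) ≃* (H ≃g H) where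
  toFun φ := (e.symm.trans φ).trans e
  invFun ψ := (e.trans ψ).trans e.symm
  left_inv φ := RelIso.ext fun v => by
    simp [RelIso.trans_apply]
  right_inv ψ := RelIso.ext fun v => by
    simp [RelIso.trans_apply]
  map_mul' φ1 φ2 := RelIso.ext fun v => by
    simp only [RelIso.trans_apply, RelIso.mul_apply]
    rw [RelIso.symm_apply_apply]
lemma psi_surj {n a : ℕ} (hn3 : 3 ≤ n) (han : a + 2 ≤ n) (hane : n ≠ 2*a + 2) :
    Function.Surjective (Psi n a) := by
  intro φ
  have hTwS : ∀ S : Lv n (a+2), ∃ S', φ (vS S) = vS S' := by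
    intro S
    rcases hE : φ (vS S) with S' | ⟨⟨j, T'⟩ | U'⟩
    · exact ⟨S', rfl⟩
    · exfalso
      have hE' : φ (vS S) = vM j T' := hE
      have h1 : Tw (φ.symm (vM j T')) (φ.symm (vM (j+1) T')) := tw_map φ.symm (tw_mid j T')
      have h2 : φ.symm (vM j T') = vS S := by rw [← hE', RelIso.symm_apply_apply]
      rw [h2] at h1
      exact no_twin_S hn3 han S _ h1
    · exfalso
      have hE' : φ (vS S) = vU U' := hE
      have h1 := iso_nbrCard φ (vS S)
      rw [hE', nbr_inr, nbr_inl] at h1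
      omega
  have hTwU : ∀ U : Lv n a, ∃ U', φ (vU U) = vU U' := by
    intro U
    rcases hE : φ (vU U) with S' | ⟨⟨j, T'⟩ | U'⟩
    · exfalso
      have hE' : φ (vU U) = vS S' := hE
      have h1 := iso_nbrCard φ (vU U)
      rw [hE', nbr_inr, nbr_inl] at h1
      omega
    · exfalso
      have hE' : φ (vU U) = vM j T' := hE
      have h1 : Tw (φ.symm (vM j T')) (φ.symm (vM (j+1) T')) := tw_map φ.symm (tw_mid j T')
      have h2 : φ.symm (vM j T') = vU U := by rw [← hE', RelIso.symm_apply_apply]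
      rw [h2] at h1
      exact no_twin_U hn3 han U _ h1
    · exact ⟨U', rfl⟩
  have hTwM : ∀ (i : ZMod 2) (T : Lv n (a+1)),
      ∃ (j : ZMod 2) (T' : Lv n (a+1)), φ (vM i T) = vM j T' := by
    intro i T
    rcases hE : φ (vM i T) with S' | ⟨⟨j, T'⟩ | U'⟩
    · exfalso
      have hE' : φ (vM i T) = vS S' := hE
      have h1 : Tw (φ (vM i T)) (φ (vM (i+1) T)) := tw_map φ (tw_mid i T)
      rw [hE'] at h1
      exact no_twin_S hn3 han S' _ h1
    · exact ⟨j, T', rfl⟩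
    · exfalso
      have hE' : φ (vM i T) = vU U' := hE
      have h1 : Tw (φ (vM i T)) (φ (vM (i+1) T)) := tw_map φ (tw_mid i T)
      rw [hE'] at h1
      exact no_twin_U hn3 han U' _ h1
  choose A0 hA0 using hTwS
  choose C0 hC0 using hTwU
  choose jf Bf hmid using hTwM
  have hBf : ∀ (i : ZMod 2) (T : Lv n (a+1)), Bf i T = Bf 0 T := by
    intro i T
    rcases (by decide : ∀ x : ZMod 2, x = 0 ∨ x = 1) i with rfl | rfl
    · rfl
    · have h1 : Tw (φ (vM 0 T)) (φ (vM (0+1) T)) := tw_map φ (tw_mid 0 T)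
      rw [hmid 0 T, show (0:ZMod 2)+1 = 1 by decide, hmid 1 T] at h1
      exact (twin_mid_T hn3 han h1).symm
  have hjf : ∀ T : Lv n (a+1), jf 0 T ≠ jf 1 T := by
    intro T he
    have h1 : φ (vM 0 T) = φ (vM 1 T) := by
      rw [hmid 0 T, hmid 1 T, hBf 1 T, he]
    have h2 := φ.toEquiv.injective h1
    simp only [vM, Sum.inr.injEq, Sum.inl.injEq, Prod.mk.injEq] at h2
    exact (by decide : (0:ZMod 2) ≠ 1) h2.1
  have hA0inj : Function.Injective A0 := by
    intro S S' h
    have h3 : φ (vS S) = φ (vS S') := by rw [hA0 S, hA0 S', h]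
    have h4 := φ.toEquiv.injective h3
    simpa only [vS, Sum.inl.injEq] using h4
  have hC0inj : Function.Injective C0 := by
    intro U U' h
    have h3 : φ (vU U) = φ (vU U') := by rw [hC0 U, hC0 U', h]
    have h4 := φ.toEquiv.injective h3
    simpa only [vU, Sum.inr.injEq] using h4
  have hB0inj : Function.Injective (fun T => Bf 0 T) := by
    intro T T' h
    have h' : Bf 0 T = Bf 0 T' := h
    by_contra hne
    have e1 : jf 0 T ≠ jf 0 T' := by
      intro he
      apply hne
      have h3 : φ (vM 0 T) = φ (vM 0 T') := by rw [hmid 0 T, hmid 0 T', he, h']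
      have h4 := φ.toEquiv.injective h3
      simp only [vM, Sum.inr.injEq, Sum.inl.injEq, Prod.mk.injEq] at h4
      exact h4.2
    have e2 : jf 1 T ≠ jf 0 T' := by
      intro he
      have h3 : φ (vM 1 T) = φ (vM 0 T') := by rw [hmid 1 T, hmid 0 T', hBf 1 T, he, h']
      have h4 := φ.toEquiv.injective h3
      simp only [vM, Sum.inr.injEq, Sum.inl.injEq, Prod.mk.injEq] at h4
      exact (by decide : ¬((1:ZMod 2) = 0)) h4.1
    have e3 := hjf T
    revert e1 e2 e3
    generalize jf 0 T = x
    generalize jf 1 T = y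
    generalize jf 0 T' = z
    revert x y z
    decide
  have hkeyBA : ∀ (T : Lv n (a+1)) (S : Lv n (a+2)),
      T.1 ⊆ S.1 ↔ (Bf 0 T).1 ⊆ (A0 S).1 := by
    intro T S
    calc T.1 ⊆ S.1 ↔ (Hg n a).Adj (vM 0 T) (vS S) := (hg_MS _ _ _).symm
      _ ↔ (Hg n a).Adj (φ (vM 0 T)) (φ (vS S)) := φ.map_rel_iff.symm
      _ ↔ (Bf 0 T).1 ⊆ (A0 S).1 := by rw [hmid 0 T, hA0 S]; exact hg_MS _ _ _
  have hkeyCB : ∀ (U : Lv n a) (T : Lv n (a+1)),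
      U.1 ⊆ T.1 ↔ (C0 U).1 ⊆ (Bf 0 T).1 := by
    intro U T
    calc U.1 ⊆ T.1 ↔ (Hg n a).Adj (vU U) (vM 0 T) := (hg_UM _ _ _).symm
      _ ↔ (Hg n a).Adj (φ (vU U)) (φ (vM 0 T)) := φ.map_rel_iff.symm
      _ ↔ (C0 U).1 ⊆ (Bf 0 T).1 := by rw [hmid 0 T, hC0 U]; exact hg_UM _ _ _
  set Aeq := Equiv.ofBijective A0 (Finite.injective_iff_bijective.1 hA0inj) with hAeq
  set Beq := Equiv.ofBijective _ (Finite.injective_iff_bijective.1 hB0inj) with hBeq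
  set Ceq := Equiv.ofBijective C0 (Finite.injective_iff_bijective.1 hC0inj) with hCeq
  have hBA : Compat Beq Aeq := fun T S => hkeyBA T S
  have hCB : Compat Ceq Beq := fun U T => hkeyCB U T
  obtain ⟨σ, hBσ, hAσ⟩ := rigidity (a+1) han Beq Aeq hBA
  have hCσ := below_unique han hCB σ hBσ
  set f0 : Lv n (a+1) → Multiplicative (ZMod 2) :=
    fun S' => Multiplicative.ofAdd (jf 0 (Beq.symm S')) with hf0
  refine ⟨⟨f0, σ⟩, ?_⟩
  apply RelIso.ext
  intro v
  rcases v with S | ⟨⟨i, T⟩ | U⟩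
  · show wmap f0 σ (vS S) = φ (vS S)
    rw [hA0 S]
    simp only [wmap]
    congr 1
    exact Subtype.ext ((permSubsets_val σ S).trans (hAσ S).symm)
  · show wmap f0 σ (vM i T) = φ (vM i T)
    rw [hmid i T, hBf i T]
    simp only [wmap]
    have hps : permSubsets n (a+1) σ T = Beq T :=
      Subtype.ext ((permSubsets_val σ T).trans (hBσ T).symm)
    rw [hps, hf0]
    simp only [Equiv.symm_apply_apply, toAdd_ofAdd]
    have hz : i + jf 0 T = jf i T := by
      rcases (by decide : ∀ x : ZMod 2, x = 0 ∨ x = 1) i with rfl | rfl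
      · rw [zero_add]
      · have hd := hjf T
        revert hd
        generalize jf 0 T = x
        generalize jf 1 T = y
        revert x y
        decide
    rw [hz]
    rfl
  · show wmap f0 σ (vU U) = φ (vU U)
    rw [hC0 U]
    simp only [wmap]
    congr 1
    exact Subtype.ext ((permSubsets_val σ U).trans (hCσ U).symm)
/-- For n > 2, 2 ≤ k ≤ n with 2k ≠ n + 2, the automorphism group of
F_k(K_{2,n}) is the wreath product ℤ/2ℤ ≀_Ω S_n, realized as the semidirect
product (Ω → ℤ/2ℤ) ⋊ S_n, where Ω is the set of (k-1)-element subsets of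
Fin n. -/
theorem aut_tokenGraph_K2n (n k : ℕ) (hn : 2 < n) (hk1 : 2 ≤ k) (hk2 : k ≤ n)
    (hne : 2 * k ≠ n + 2) :
    Nonempty ((tokenGraph (completeBipartiteGraph (Fin 2) (Fin n)) k ≃g
        tokenGraph (completeBipartiteGraph (Fin 2) (Fin n)) k) ≃*
      ({S : Finset (Fin n) // S.card = k - 1} → Multiplicative (ZMod 2))
        ⋊[wreathAction n (k - 1)] Equiv.Perm (Fin n)) := by
  obtain ⟨a, rfl⟩ : ∃ a, k = a + 2 := ⟨k - 2, by omega⟩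
  have hn3 : 3 ≤ n := hn
  have han : a + 2 ≤ n := hk2
  have hane : n ≠ 2 * a + 2 := by omega
  exact ⟨(autCongr (decIso (n := n) (a := a))).symm.trans
    (MulEquiv.ofBijective (Psi n a) ⟨psi_inj han, psi_surj hn3 han hane⟩).symm⟩
end homsec
end

section
/- Let r ≥ 2 and let G₁, …, G_r be finite simple graphs, and let G = G₁ □ ⋯ □ G_r be their Cartesian (box) product, with vertices the tuples (x₁,…,x_r). For any subset α ⊆ {1,…,r}, define φ_α on vertices of F_2(G) by φ_α({x, y}) = {x', y'}, where x'_i = y_i and y'_i = x_i for every i ∈ α, and x'_i = x_i and y'_i = y_i for every i ∉ α. Then φ_α is well defined (x' ≠ y' whenever x ≠ y) and is an automorphism of F_2(G). -/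
/-- The Cartesian (box) product of a family of simple graphs: two tuples are
adjacent iff they are adjacent in exactly one coordinate and equal in all the
other coordinates. -/
def piBoxProd {ι : Type*} {V : ι → Type*} (G : ∀ i, SimpleGraph (V i)) :
    SimpleGraph (∀ i, V i) where
  Adj x y := ∃ i, (G i).Adj (x i) (y i) ∧ ∀ j, j ≠ i → x j = y j
  symm := by
    constructor
    rintro x y ⟨i, h, hj⟩
    exact ⟨i, h.symm, fun j hji => (hj j hji).symm⟩
  loopless := by
    constructor
    rintro x ⟨i, h, _⟩
    exact h.ne rfl

/-- Given a pair of tuples `x, y` and a set `α` of coordinates, the tuple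
that agrees with `y` on `α` and with `x` elsewhere. -/
def swapCoords {ι : Type*} {V : ι → Type*} [DecidableEq ι] (α : Finset ι)
    (x y : ∀ i, V i) : ∀ i, V i :=
  fun i => if i ∈ α then y i else x i

section Aux

variable {ι : Type*} {V : ι → Type*} [DecidableEq ι] (α : Finset ι)

lemma sw_sw (x y : ∀ i, V i) :
    swapCoords α (swapCoords α x y) (swapCoords α y x) = x := by
  funext i
  by_cases h : i ∈ α <;> simp [swapCoords, h]

lemma sw_ne {x y : ∀ i, V i} (hxy : x ≠ y) :
    swapCoords α x y ≠ swapCoords α y x := by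
  intro h
  apply hxy
  funext i
  have := congrFun h i
  by_cases hi : i ∈ α <;> simpa [swapCoords, hi, eq_comm] using this

variable [DecidableEq (∀ i, V i)]

/-- The image pair. -/
def swapPairFinset (x y : ∀ i, V i) : Finset (∀ i, V i) :=
  {swapCoords α x y, swapCoords α y x}

lemma swapPairFinset_comm (x y : ∀ i, V i) :
    swapPairFinset α x y = swapPairFinset α y x := Finset.pair_comm _ _

lemma card_swapPairFinset {x y : ∀ i, V i} (hxy : x ≠ y) :
    (swapPairFinset α x y).card = 2 := Finset.card_pair (sw_ne α hxy)

noncomputable def swapMap (A : {A : Finset (∀ i, V i) // A.card = 2}) :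
    {A : Finset (∀ i, V i) // A.card = 2} :=
  ⟨swapPairFinset α (Finset.card_eq_two.mp A.2).choose
      (Finset.card_eq_two.mp A.2).choose_spec.choose,
    card_swapPairFinset α (Finset.card_eq_two.mp A.2).choose_spec.choose_spec.1⟩

lemma pair_eq_pair_iff {W : Type*} [DecidableEq W] {a b c d : W} (hab : a ≠ b)
    (h : ({a, b} : Finset W) = {c, d}) : (a = c ∧ b = d) ∨ (a = d ∧ b = c) := by
  have ha : a ∈ ({c, d} : Finset W) := h ▸ (by simp : a ∈ ({a, b} : Finset W))
  have hb : b ∈ ({c, d} : Finset W) := h ▸ (by simp : b ∈ ({a, b} : Finset W))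
  have hc : c ∈ ({a, b} : Finset W) := h ▸ (by simp : c ∈ ({c, d} : Finset W))
  have hd : d ∈ ({a, b} : Finset W) := h ▸ (by simp : d ∈ ({c, d} : Finset W))
  simp only [Finset.mem_insert, Finset.mem_singleton] at ha hb hc hd
  rcases ha with rfl | rfl
  · rcases hb with rfl | rfl
    · rcases hd with h1 | h1 <;> simp_all
    · exact Or.inl ⟨rfl, rfl⟩
  · rcases hb with rfl | rfl
    · exact Or.inr ⟨rfl, rfl⟩
    · rcases hc with h1 | h1 <;> simp_all

lemma swapMap_spec (A : {A : Finset (∀ i, V i) // A.card = 2}) (x y : ∀ i, V i)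
    (hxy : x ≠ y) (hA : A.1 = {x, y}) :
    (swapMap α A).1 = swapPairFinset α x y := by
  obtain ⟨hne, heq⟩ := (Finset.card_eq_two.mp A.2).choose_spec.choose_spec
  rcases pair_eq_pair_iff hne (heq.symm.trans hA) with ⟨rfl, rfl⟩ | ⟨rfl, rfl⟩
  · rfl
  · exact swapPairFinset_comm α _ _

lemma swapMap_invol (A : {A : Finset (∀ i, V i) // A.card = 2}) :
    swapMap α (swapMap α A) = A := by
  obtain ⟨x, y, hxy, hA⟩ := Finset.card_eq_two.mp A.2
  have h1 : (swapMap α A).1 = swapPairFinset α x y := swapMap_spec α A x y hxy hA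
  have h2 : (swapMap α (swapMap α A)).1 =
      swapPairFinset α (swapCoords α x y) (swapCoords α y x) :=
    swapMap_spec α _ _ _ (sw_ne α hxy) h1
  apply Subtype.ext
  rw [h2, hA]
  unfold swapPairFinset
  rw [sw_sw]
  congr 1
  have : swapCoords α (swapCoords α y x) (swapCoords α x y) = y := sw_sw α y x
  rw [this]


lemma symmDiff_pair' {W : Type*} [DecidableEq W] {u v c : W} (huv : u ≠ v)
    (huc : u ≠ c) (hvc : v ≠ c) :
    symmDiff ({u, c} : Finset W) {v, c} = {u, v} := by
  ext w
  simp only [Finset.mem_symmDiff, Finset.mem_insert, Finset.mem_singleton]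
  constructor
  · rintro (⟨h1 | h1, h2⟩ | ⟨h1 | h1, h2⟩) <;> tauto
  · rintro (rfl | rfl)
    · exact Or.inl ⟨Or.inl rfl, by tauto⟩
    · exact Or.inr ⟨Or.inl rfl, by tauto⟩

lemma adj_decomp {W : Type*} [DecidableEq W] {A B : Finset W}
    (hA : A.card = 2) (hB : B.card = 2) {a b : W} (hab : a ≠ b)
    (h : symmDiff A B = {a, b}) :
    ∃ x y z, y ≠ z ∧ x ≠ y ∧ x ≠ z ∧ A = {x, y} ∧ B = {x, z} ∧
      ({y, z} : Finset W) = {a, b} := by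
  obtain ⟨p, q, hpq, rfl⟩ := Finset.card_eq_two.mp hA
  by_cases hp : p ∈ B <;> by_cases hq : q ∈ B
  · -- A ⊆ B so A = B, symmDiff = ∅, contradiction
    have hAB : ({p, q} : Finset W) = B := by
      apply Finset.eq_of_subset_of_card_le
      · intro w hw
        simp only [Finset.mem_insert, Finset.mem_singleton] at hw
        rcases hw with rfl | rfl <;> assumption
      · rw [hB, hA]
    rw [hAB, symmDiff_self] at h
    exact absurd h.symm (by simp [Finset.insert_ne_empty])
  · -- p ∈ B, q ∉ B
    obtain ⟨t, ht⟩ := Finset.card_eq_one.mp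
      (by rw [Finset.card_erase_of_mem hp, hB])
    have hBt : B = {p, t} := by
      rw [← Finset.insert_erase hp, ht]
    have hpt : p ≠ t := by
      intro he
      have : t ∈ B.erase p := ht ▸ Finset.mem_singleton_self t
      exact (Finset.ne_of_mem_erase this) he.symm
    have hqt : q ≠ t := by
      rintro rfl
      exact hq (hBt ▸ by simp)
    refine ⟨p, q, t, hqt, hpq, hpt, by rw [Finset.pair_comm], hBt, ?_⟩
    rw [← h, hBt, Finset.pair_comm p q, Finset.pair_comm p t]
    exact (symmDiff_pair' hqt (fun e => hpq e.symm) (fun e => hpt e.symm)).symm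
  · -- q ∈ B, p ∉ B
    obtain ⟨t, ht⟩ := Finset.card_eq_one.mp
      (by rw [Finset.card_erase_of_mem hq, hB])
    have hBt : B = {q, t} := by
      rw [← Finset.insert_erase hq, ht]
    have hqt : q ≠ t := by
      intro he
      have : t ∈ B.erase q := ht ▸ Finset.mem_singleton_self t
      exact (Finset.ne_of_mem_erase this) he.symm
    have hpt : p ≠ t := by
      rintro rfl
      exact hp (hBt ▸ by simp)
    refine ⟨q, p, t, hpt, fun e => hpq e.symm, hqt, by rw [Finset.pair_comm], hBt, ?_⟩
    rw [← h, hBt, Finset.pair_comm q t]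
    exact (symmDiff_pair' hpt hpq (fun e => hqt e.symm)).symm
  · -- disjoint: A ⊆ symmDiff, B ⊆ symmDiff, both eq {a,b}, contradiction
    exfalso
    have hAsub : ({p, q} : Finset W) ⊆ symmDiff ({p, q} : Finset W) B := by
      intro w hw
      rw [Finset.mem_symmDiff]
      simp only [Finset.mem_insert, Finset.mem_singleton] at hw
      rcases hw with rfl | rfl
      · exact Or.inl ⟨by simp, hp⟩
      · exact Or.inl ⟨by simp, hq⟩
    have hAeq : ({p, q} : Finset W) = {a, b} := by
      apply Finset.eq_of_subset_of_card_le (h ▸ hAsub)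
      rw [Finset.card_pair hab, hA]
    have hBsub : B ⊆ symmDiff ({p, q} : Finset W) B := by
      intro w hw
      rw [Finset.mem_symmDiff]
      refine Or.inr ⟨hw, ?_⟩
      simp only [Finset.mem_insert, Finset.mem_singleton]
      rintro (rfl | rfl) <;> [exact hp hw; exact hq hw]
    have hBeq : B = {a, b} := by
      apply Finset.eq_of_subset_of_card_le (h ▸ hBsub)
      rw [Finset.card_pair hab, hB]
    exact hp (hBeq ▸ hAeq ▸ (by simp : p ∈ ({p, q} : Finset W)))


lemma swapMap_adj (G : ∀ i, SimpleGraph (V i))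
    {A B : {A : Finset (∀ i, V i) // A.card = 2}}
    (h : (tokenGraph (piBoxProd G) 2).Adj A B) :
    (tokenGraph (piBoxProd G) 2).Adj (swapMap α A) (swapMap α B) := by
  obtain ⟨a, b, hab, hsd⟩ := h
  obtain ⟨x, y, z, hyz, hxy, hxz, hAeq, hBeq, hpair⟩ :=
    adj_decomp A.2 B.2 hab.ne hsd
  have hadjyz : (piBoxProd G).Adj y z := by
    rcases pair_eq_pair_iff hyz hpair with ⟨rfl, rfl⟩ | ⟨rfl, rfl⟩
    · exact hab
    · exact hab.symm
  obtain ⟨i₀, hi₀, hrest⟩ := hadjyz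
  have hFA := swapMap_spec α A x y hxy hAeq
  have hFB := swapMap_spec α B x z hxz hBeq
  by_cases hmem : i₀ ∈ α
  · have hzx : swapCoords α z x = swapCoords α y x := by
      funext i
      by_cases hi : i ∈ α
      · simp [swapCoords, hi]
      · have : y i = z i := hrest i (fun e => hi (e ▸ hmem))
        simp [swapCoords, hi, this]
    refine ⟨swapCoords α x y, swapCoords α x z, ⟨i₀, ?_, ?_⟩, ?_⟩
    · simpa [swapCoords, hmem] using hi₀
    · intro j hj
      by_cases hjα : j ∈ α
      · simp [swapCoords, hjα, hrest j hj]
      · simp [swapCoords, hjα]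
    · show symmDiff (swapMap α A).1 (swapMap α B).1 = _
      rw [hFA, hFB]
      unfold swapPairFinset
      rw [hzx]
      apply symmDiff_pair'
      · intro he
        exact hi₀.ne (by simpa [swapCoords, hmem] using congrFun he i₀)
      · exact sw_ne α hxy
      · rw [← hzx]; exact sw_ne α hxz
  · have hxzxy : swapCoords α x z = swapCoords α x y := by
      funext i
      by_cases hi : i ∈ α
      · have : y i = z i := hrest i (fun e => hmem (e ▸ hi))
        simp [swapCoords, hi, this]
      · simp [swapCoords, hi]
    refine ⟨swapCoords α y x, swapCoords α z x, ⟨i₀, ?_, ?_⟩, ?_⟩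
    · simpa [swapCoords, hmem] using hi₀
    · intro j hj
      by_cases hjα : j ∈ α
      · simp [swapCoords, hjα]
      · simp [swapCoords, hjα, hrest j hj]
    · show symmDiff (swapMap α A).1 (swapMap α B).1 = _
      rw [hFA, hFB]
      unfold swapPairFinset
      rw [hxzxy]
      rw [Finset.pair_comm (swapCoords α x y) (swapCoords α y x),
        Finset.pair_comm (swapCoords α x y) (swapCoords α z x)]
      apply symmDiff_pair'
      · intro he
        exact hi₀.ne (by simpa [swapCoords, hmem] using congrFun he i₀)
      · exact fun e => sw_ne α hxy e.symm
      · rw [← hxzxy]; exact fun e => sw_ne α hxz e.symm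

end Aux

/-- For a box product G = G₁ □ ⋯ □ G_r (r ≥ 2) and a set α of coordinates,
the map φ_α swapping the two tokens in the coordinates of α is well defined
(x'\'' ≠ y'\'' whenever x ≠ y) and is an automorphism of F₂(G). -/
theorem swap_automorphism_tokenGraph_boxProd (r : ℕ) (hr : 2 ≤ r)
    (V : Fin r → Type*) [∀ i, Fintype (V i)] [∀ i, DecidableEq (V i)]
    (G : ∀ i, SimpleGraph (V i)) (α : Finset (Fin r)) :
    (∀ x y : ∀ i, V i, x ≠ y → swapCoords α x y ≠ swapCoords α y x) ∧
    ∃ φ : tokenGraph (piBoxProd G) 2 ≃g tokenGraph (piBoxProd G) 2,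
      ∀ (x y : ∀ i, V i) (h : ({x, y} : Finset (∀ i, V i)).card = 2),
        ((φ ⟨{x, y}, h⟩ : Finset (∀ i, V i))) =
          {swapCoords α x y, swapCoords α y x} := by
  refine ⟨fun x y hxy => sw_ne α hxy,
    ⟨⟨⟨swapMap α, swapMap α, swapMap_invol α, swapMap_invol α⟩,
      fun {A B} => ?_⟩, ?_⟩⟩
  · constructor
    · intro h
      have h2 := swapMap_adj α G h
      simp only [Equiv.coe_fn_mk] at h h2
      rwa [swapMap_invol, swapMap_invol] at h2
    · exact swapMap_adj α G
  · intro x y h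
    have hxy : x ≠ y := by
      rintro rfl
      simp at h
    have := swapMap_spec α ⟨{x, y}, h⟩ x y hxy rfl
    simpa [swapPairFinset] using this
end

section
/- Let G be a finite connected simple graph that equals a Cartesian (box) product G = G₁ □ ⋯ □ G_r with r ≥ 2 factors, where each G_i is connected, has at least two vertices, and is prime with respect to the box product (i.e., G_i is not isomorphic to a box product of two graphs each having at least two vertices). Then 2^{r−1} · |Aut(G)| divides |Aut(F_2(G))|; in particular |Aut(F_2(G))| ≥ 2^{r−1} · |Aut(G)|. -/
/-- A graph is prime with respect to the Cartesian (box) product if it is not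
isomorphic to a box product of two graphs each having at least two
vertices. -/
def IsBoxPrime {W : Type u} (G : SimpleGraph W) : Prop :=
  ¬ ∃ (A B : Type u) (H : SimpleGraph A) (K : SimpleGraph B),
      Nontrivial A ∧ Nontrivial B ∧ Nonempty (G ≃g H.boxProd K)


set_option linter.unusedSectionVars false



/-- Abstract counting lemma: if `f : B →* A` is injective, its image normalizes a
subgroup `N`, meets `N` trivially, and `C` embeds into `N`, then
`|C| * |B| ∣ |A|`. -/
lemma key_count {A : Type*} [Group A] [Finite A] {B : Type*} [Group B]
    (f : B →* A) (N S : Subgroup A) (hS : S ≤ N)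
    (hconj : ∀ b, ∀ ν ∈ N, f b * ν * (f b)⁻¹ ∈ N)
    (htriv : ∀ b, f b ∈ N → b = 1) :
    Nat.card S * Nat.card B ∣ Nat.card A := by
  set P := Subgroup.normalizer (N : Set A) with hP
  have hfP : ∀ b, f b ∈ P := by
    intro b
    rw [Subgroup.mem_normalizer_iff]
    intro h
    constructor
    · intro hh; exact hconj b h hh
    · intro hh
      have := hconj b⁻¹ _ hh
      simpa [map_inv, mul_assoc] using this
  -- |S| divides |N|
  have hC : Nat.card S ∣ Nat.card N := Subgroup.card_dvd_of_le hS
  -- |B| divides |P ⧸ N'|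
  set N' := N.subgroupOf P with hN'
  haveI : (N').Normal := Subgroup.normal_in_normalizer
  have hB : Nat.card B ∣ Nat.card (P ⧸ N') := by
    set q : P →* P ⧸ N' := QuotientGroup.mk' N'
    have hinj : Function.Injective (q.comp (f.codRestrict P hfP)) := by
      rw [injective_iff_map_eq_one]
      intro b hb
      have h1 : (f.codRestrict P hfP) b ∈ N' := by
        rw [← QuotientGroup.eq_one_iff ((f.codRestrict P hfP) b)]
        exact hb
      have : f b ∈ N := h1
      exact htriv b this
    exact Subgroup.card_dvd_of_injective _ hinj
  have hPcard : Nat.card P = Nat.card (P ⧸ N') * Nat.card N' :=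
    Subgroup.card_eq_card_quotient_mul_card_subgroup N'
  have hNN' : Nat.card N' = Nat.card N :=
    Nat.card_congr (Subgroup.subgroupOfEquivOfLe Subgroup.le_normalizer).toEquiv
  calc Nat.card S * Nat.card B ∣ Nat.card N * Nat.card (P ⧸ N') :=
        mul_dvd_mul hC hB
    _ = Nat.card P := by rw [hPcard, hNN', mul_comm]
    _ ∣ Nat.card A := Subgroup.card_subgroup_dvd_card P

section Ind
variable {W : Type*} [DecidableEq W] {H : SimpleGraph W} {k : ℕ}

lemma map_symmDiff2 (e : W ≃ W) (A B : Finset W) :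
    symmDiff (A.map e.toEmbedding) (B.map e.toEmbedding)
      = (symmDiff A B).map e.toEmbedding := by
  ext w
  simp [Finset.mem_symmDiff, Finset.mem_map_equiv]

/-- the equiv on `k`-subsets induced by an equiv of vertices -/
def tokenEquivMap (e : W ≃ W) (p : {A : Finset W // A.card = k}) : {A : Finset W // A.card = k} :=
  ⟨p.1.map e.toEmbedding, by rw [Finset.card_map]; exact p.2⟩

lemma tokenEquivMap_fst (e : W ≃ W) (p : {A : Finset W // A.card = k}) :
    (tokenEquivMap e p).1 = p.1.map e.toEmbedding := rfl

omit [DecidableEq W] in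
lemma tokenEquivMap_comp (e f : W ≃ W) (p : {A : Finset W // A.card = k}) :
    tokenEquivMap e (tokenEquivMap f p) = tokenEquivMap (f.trans e) p := by
  apply Subtype.ext
  simp only [tokenEquivMap, Finset.map_map]
  rfl

omit [DecidableEq W] in
lemma tokenEquivMap_id (p : {A : Finset W // A.card = k}) :
    tokenEquivMap (Equiv.refl W) p = p := by
  apply Subtype.ext
  simp [tokenEquivMap]

lemma tokenAdj_map (e : H ≃g H) {p q : {A : Finset W // A.card = k}}
    (h : (tokenGraph H k).Adj p q) :
    (tokenGraph H k).Adj (tokenEquivMap e.toEquiv p) (tokenEquivMap e.toEquiv q) := by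
  obtain ⟨a, b, hab, hsd⟩ := h
  refine ⟨e a, e b, by simpa using e.map_adj_iff.2 hab, ?_⟩
  rw [tokenEquivMap_fst, tokenEquivMap_fst, map_symmDiff2, hsd]
  simp

/-- the induced automorphism of the token graph -/
def tokenIso (e : H ≃g H) : tokenGraph H k ≃g tokenGraph H k where
  toFun := tokenEquivMap e.toEquiv
  invFun := tokenEquivMap e.symm.toEquiv
  left_inv := fun p => by
    rw [tokenEquivMap_comp]
    have : (e.toEquiv.trans e.symm.toEquiv) = Equiv.refl W := by
      ext w; simp
    rw [this, tokenEquivMap_id]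
  right_inv := fun p => by
    rw [tokenEquivMap_comp]
    have : (e.symm.toEquiv.trans e.toEquiv) = Equiv.refl W := by
      ext w; simp
    rw [this, tokenEquivMap_id]
  map_rel_iff' := by
    intro p q
    constructor
    · intro h
      have h2 := tokenAdj_map e.symm h
      show (tokenGraph H k).Adj p q
      have e1 : tokenEquivMap e.symm.toEquiv (tokenEquivMap e.toEquiv p) = p := by
        rw [tokenEquivMap_comp]
        have : (e.toEquiv.trans e.symm.toEquiv) = Equiv.refl W := by ext w; simp
        rw [this, tokenEquivMap_id]
      have e2 : tokenEquivMap e.symm.toEquiv (tokenEquivMap e.toEquiv q) = q := by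
        rw [tokenEquivMap_comp]
        have : (e.toEquiv.trans e.symm.toEquiv) = Equiv.refl W := by ext w; simp
        rw [this, tokenEquivMap_id]
      rw [← e1, ← e2]
      exact h2
    · exact tokenAdj_map e

/-- `Ind` as a monoid hom from `Aut H` to `Aut (tokenGraph H k)` -/
def Ind (H : SimpleGraph W) [DecidableEq W] (k : ℕ) :
    (H ≃g H) →* (tokenGraph H k ≃g tokenGraph H k) :=
  MonoidHom.mk' (fun e => tokenIso e) (by
    intro e f
    apply RelIso.ext
    intro p
    show tokenEquivMap _ p = tokenEquivMap _ (tokenEquivMap _ p)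
    rw [tokenEquivMap_comp]
    rfl)

lemma Ind_apply (e : H ≃g H) (p : {A : Finset W // A.card = k}) :
    (Ind H k e p).1 = p.1.map e.toEquiv.toEmbedding := rfl
end Ind

section Sigma
variable {ι : Type*} [Fintype ι] [DecidableEq ι] {V : ι → Type*} [∀ i, DecidableEq (V i)]

/-- mixing two tuples according to a `ZMod 2`-vector -/
def mix (s : ι → ZMod 2) (x y : ∀ i, V i) : ∀ i, V i :=
  fun i => if s i = 1 then y i else x i

lemma mix_apply (s : ι → ZMod 2) (x y : ∀ i, V i) (i : ι) :
    mix s x y i = if s i = 1 then y i else x i := rfl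

lemma zmod2_cases (a : ZMod 2) : a = 0 ∨ a = 1 := by revert a; decide

lemma mix_mix (s t : ι → ZMod 2) (x y : ∀ i, V i) :
    mix s (mix t x y) (mix t y x) = mix (s + t) x y := by
  funext i
  rcases zmod2_cases (s i) with hs | hs <;> rcases zmod2_cases (t i) with ht | ht <;>
    simp [mix, hs, ht]

lemma mix_zero (x y : ∀ i, V i) : mix 0 x y = x := by
  funext i; simp [mix]

lemma mix_add_one (s : ι → ZMod 2) (x y : ∀ i, V i) :
    mix (s + 1) x y = mix s y x := by
  funext i
  rcases zmod2_cases (s i) with hs | hs <;> simp [mix, hs]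

lemma mix_ne {x y : ∀ i, V i} (s : ι → ZMod 2) (h : x ≠ y) : mix s x y ≠ mix s y x := by
  intro hc
  apply h
  funext i
  have := congrFun hc i
  rcases zmod2_cases (s i) with hs | hs <;> simpa [mix, hs, eq_comm] using this

/-- the raw action of `σ_s` on finsets -/
def sigmaRaw (s : ι → ZMod 2) (p : Finset (∀ i, V i)) : Finset (∀ i, V i) :=
  ((p ×ˢ p).filter (fun z => z.1 ≠ z.2)).image (fun z => mix s z.1 z.2)

lemma sigmaRaw_pair (s : ι → ZMod 2) {x y : ∀ i, V i} (h : x ≠ y) :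
    sigmaRaw s {x, y} = {mix s x y, mix s y x} := by
  ext w
  simp only [sigmaRaw, Finset.mem_image, Finset.mem_filter, Finset.mem_product,
    Finset.mem_insert, Finset.mem_singleton]
  constructor
  · rintro ⟨⟨u, v⟩, ⟨⟨hu, hv⟩, huv⟩, rfl⟩
    dsimp only at hu hv huv ⊢
    rcases hu with rfl | rfl <;> rcases hv with rfl | rfl
    · exact absurd rfl huv
    · exact Or.inl rfl
    · exact Or.inr rfl
    · exact absurd rfl huv
  · rintro (rfl | rfl)
    · exact ⟨(x, y), ⟨⟨Or.inl rfl, Or.inr rfl⟩, h⟩, rfl⟩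
    · exact ⟨(y, x), ⟨⟨Or.inr rfl, Or.inl rfl⟩, Ne.symm h⟩, rfl⟩

lemma sigmaRaw_card (s : ι → ZMod 2) {p : Finset (∀ i, V i)} (hp : p.card = 2) :
    (sigmaRaw s p).card = 2 := by
  obtain ⟨x, y, hxy, rfl⟩ := Finset.card_eq_two.1 hp
  rw [sigmaRaw_pair s hxy]
  exact Finset.card_pair (mix_ne s hxy)

lemma sigmaRaw_invol (s : ι → ZMod 2) {p : Finset (∀ i, V i)} (hp : p.card = 2) :
    sigmaRaw s (sigmaRaw s p) = p := by
  obtain ⟨x, y, hxy, rfl⟩ := Finset.card_eq_two.1 hp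
  rw [sigmaRaw_pair s hxy, sigmaRaw_pair s (mix_ne s hxy), mix_mix, mix_mix]
  have h11 : (1 : ZMod 2) + 1 = 0 := by decide
  have h2 : s + s = 0 := by
    funext i
    rcases zmod2_cases (s i) with hs | hs <;> simp [hs, h11]
  rw [h2, mix_zero, mix_zero]
end Sigma

lemma pair_symmDiff {α : Type*} [DecidableEq α] {x y z : α}
    (hxz : x ≠ z) (hyz : y ≠ z) (hxy : x ≠ y) :
    symmDiff ({x, z} : Finset α) {y, z} = {x, y} := by
  ext w
  simp only [Finset.mem_symmDiff, Finset.mem_insert, Finset.mem_singleton]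
  constructor
  · rintro (⟨rfl | rfl, h⟩ | ⟨rfl | rfl, h⟩)
    · exact Or.inl rfl
    · exact absurd (Or.inr rfl) h
    · exact Or.inr rfl
    · exact absurd (Or.inr rfl) h
  · rintro (rfl | rfl)
    · exact Or.inl ⟨Or.inl rfl, by rintro (rfl | rfl) <;> [exact hxy rfl; exact hxz rfl]⟩
    · exact Or.inr ⟨Or.inl rfl, by rintro (rfl | rfl) <;> [exact hxy rfl; exact hyz rfl]⟩

lemma two_two_symmDiff {α : Type*} [DecidableEq α] {p q : Finset α} {a b : α}
    (hp : p.card = 2) (hq : q.card = 2) (hab : a ≠ b) (h : symmDiff p q = {a, b}) :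
    ∃ c, c ≠ a ∧ c ≠ b ∧ ((p = {a, c} ∧ q = {b, c}) ∨ (p = {b, c} ∧ q = {a, c})) := by
  have hsd : symmDiff p q = (p \ q) ∪ (q \ p) := by
    ext w; simp [Finset.mem_symmDiff, Finset.mem_union, Finset.mem_sdiff]
  have hdisj : Disjoint (p \ q) (q \ p) := disjoint_sdiff_sdiff
  have hcard2 : (p \ q).card + (q \ p).card = 2 := by
    rw [← Finset.card_union_of_disjoint hdisj, ← hsd, h]
    exact Finset.card_pair hab
  have h1 : (p \ q).card + (p ∩ q).card = 2 := by
    rw [Finset.card_sdiff_add_card_inter, hp]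
  have h2 : (q \ p).card + (q ∩ p).card = 2 := by
    rw [Finset.card_sdiff_add_card_inter, hq]
  have hqp : q ∩ p = p ∩ q := Finset.inter_comm q p
  rw [hqp] at h2
  have hk : (p ∩ q).card = 1 := by omega
  have hpq1 : (p \ q).card = 1 := by omega
  have hqp1 : (q \ p).card = 1 := by omega
  obtain ⟨c, hc⟩ := Finset.card_eq_one.1 hk
  obtain ⟨a', ha'⟩ := Finset.card_eq_one.1 hpq1
  obtain ⟨b', hb'⟩ := Finset.card_eq_one.1 hqp1
  have ha'mem : a' ∈ p \ q := by rw [ha']; exact Finset.mem_singleton_self a'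
  have hb'mem : b' ∈ q \ p := by rw [hb']; exact Finset.mem_singleton_self b'
  have hcmem : c ∈ p ∩ q := by rw [hc]; exact Finset.mem_singleton_self c
  have hcp : c ∈ p := (Finset.mem_inter.1 hcmem).1
  have hcq : c ∈ q := (Finset.mem_inter.1 hcmem).2
  have ha'p : a' ∈ p := (Finset.mem_sdiff.1 ha'mem).1
  have ha'nq : a' ∉ q := (Finset.mem_sdiff.1 ha'mem).2
  have hb'q : b' ∈ q := (Finset.mem_sdiff.1 hb'mem).1
  have hb'np : b' ∉ p := (Finset.mem_sdiff.1 hb'mem).2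
  have hca' : c ≠ a' := fun hh => ha'nq (hh ▸ hcq)
  have hcb' : c ≠ b' := fun hh => hb'np (hh ▸ hcp)
  have hpeq : p = {a', c} := by
    rw [← Finset.sdiff_union_inter p q, ha', hc]; rfl
  have hqeq : q = {b', c} := by
    rw [← Finset.sdiff_union_inter q p, hb', hqp, hc]; rfl
  have ha'ab : a' = a ∨ a' = b := by
    have : a' ∈ symmDiff p q := by rw [hsd]; exact Finset.mem_union_left _ ha'mem
    rw [h] at this; simpa using this
  have hb'ab : b' = a ∨ b' = b := by
    have : b' ∈ symmDiff p q := by rw [hsd]; exact Finset.mem_union_right _ hb'mem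
    rw [h] at this; simpa using this
  have ha'b' : a' ≠ b' := fun hh => hb'np (hh ▸ ha'p)
  rcases ha'ab with rfl | rfl
  · have hb'b : b' = b := hb'ab.resolve_left (by rintro rfl; exact ha'b' rfl)
    subst hb'b
    exact ⟨c, hca', hcb', Or.inl ⟨hpeq, hqeq⟩⟩
  · have hb'a : b' = a := hb'ab.resolve_right (by rintro rfl; exact ha'b' rfl)
    subst hb'a
    exact ⟨c, hcb', hca', Or.inr ⟨hpeq, hqeq⟩⟩
section Sigma2
variable {ι : Type*} [Fintype ι] [DecidableEq ι] {V : ι → Type*} [∀ i, DecidableEq (V i)]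
  (G : ∀ i, SimpleGraph (V i))

lemma sigmaRaw_add_one (s : ι → ZMod 2) {x y : ∀ i, V i} (h : x ≠ y) :
    sigmaRaw (s + 1) ({x, y} : Finset _) = sigmaRaw s {x, y} := by
  rw [sigmaRaw_pair _ h, sigmaRaw_pair _ h, mix_add_one, mix_add_one, Finset.pair_comm]

lemma sigma_adj_aux (s : ι → ZMod 2) {c a b : ∀ i, V i} {i : ι}
    (hca : c ≠ a) (hcb : c ≠ b)
    (hi : (G i).Adj (a i) (b i)) (hoff : ∀ j, j ≠ i → a j = b j) (hsi : s i = 1) :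
    ∃ a' b', (piBoxProd G).Adj a' b' ∧
      symmDiff (sigmaRaw s ({a, c} : Finset _)) (sigmaRaw s ({b, c} : Finset _)) = {a', b'} := by
  have hac : a ≠ c := hca.symm
  have hbc : b ≠ c := hcb.symm
  refine ⟨mix s c a, mix s c b, ?_, ?_⟩
  · refine ⟨i, ?_, ?_⟩
    · simpa [mix, hsi] using hi
    · intro j hj
      by_cases h1 : s j = 1 <;> simp [mix, h1, hoff j hj]
  · rw [sigmaRaw_pair s hac, sigmaRaw_pair s hbc]
    have hd : mix s b c = mix s a c := by
      funext j
      by_cases hji : j = i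
      · subst hji; simp [mix, hsi]
      · by_cases h1 : s j = 1 <;> simp [mix, h1, hoff j hji]
    rw [hd, Finset.pair_comm (mix s a c) (mix s c a), Finset.pair_comm (mix s a c) (mix s c b)]
    apply pair_symmDiff
    · exact mix_ne s hca
    · rw [← hd]; exact mix_ne s hcb
    · intro hh
      have := congrFun hh i
      simp only [mix, hsi, if_pos] at this
      exact hi.ne this

lemma sigma_adj (s : ι → ZMod 2) {p q : Finset (∀ i, V i)} (hp : p.card = 2) (hq : q.card = 2)
    (h : ∃ a b, (piBoxProd G).Adj a b ∧ symmDiff p q = {a, b}) :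
    ∃ a' b', (piBoxProd G).Adj a' b' ∧ symmDiff (sigmaRaw s p) (sigmaRaw s q) = {a', b'} := by
  obtain ⟨a, b, hab, hsd⟩ := h
  have habne : a ≠ b := hab.ne
  obtain ⟨c, hca, hcb, hcase⟩ := two_two_symmDiff hp hq habne hsd
  obtain ⟨i, hi, hoff⟩ := hab
  have hoff' : ∀ j, j ≠ i → b j = a j := fun j hj => (hoff j hj).symm
  rcases zmod2_cases (s i) with hs0 | hs1
  · have hs1' : (s + 1) i = 1 := by simp [Pi.add_apply, hs0]
    rcases hcase with ⟨hpe, hqe⟩ | ⟨hpe, hqe⟩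
    · rw [hpe, hqe, ← sigmaRaw_add_one s hca.symm, ← sigmaRaw_add_one s hcb.symm]
      exact sigma_adj_aux G (s + 1) hca hcb hi hoff hs1'
    · rw [hpe, hqe, ← sigmaRaw_add_one s hcb.symm, ← sigmaRaw_add_one s hca.symm]
      exact sigma_adj_aux G (s + 1) hcb hca hi.symm hoff' hs1'
  · rcases hcase with ⟨hpe, hqe⟩ | ⟨hpe, hqe⟩
    · rw [hpe, hqe]
      exact sigma_adj_aux G s hca hcb hi hoff hs1
    · rw [hpe, hqe]
      exact sigma_adj_aux G s hcb hca hi.symm hoff' hs1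

end Sigma2
section Sigma3
variable {ι : Type*} [Fintype ι] [DecidableEq ι] {V : ι → Type*} [∀ i, DecidableEq (V i)]
  (G : ∀ i, SimpleGraph (V i))

/-- the exotic automorphism `σ_s` of the 2-token graph of a box product -/
def sigmaIso (s : ι → ZMod 2) :
    tokenGraph (piBoxProd G) 2 ≃g tokenGraph (piBoxProd G) 2 where
  toFun p := ⟨sigmaRaw s p.1, sigmaRaw_card s p.2⟩
  invFun p := ⟨sigmaRaw s p.1, sigmaRaw_card s p.2⟩
  left_inv p := Subtype.ext (sigmaRaw_invol s p.2)
  right_inv p := Subtype.ext (sigmaRaw_invol s p.2)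
  map_rel_iff' := by
    intro p q
    constructor
    · intro h
      have h2 := sigma_adj G s (sigmaRaw_card s p.2) (sigmaRaw_card s q.2) h
      rw [sigmaRaw_invol s p.2, sigmaRaw_invol s q.2] at h2
      exact h2
    · intro h
      exact sigma_adj G s p.2 q.2 h

lemma sigmaIso_comp (s t : ι → ZMod 2) (p : {A : Finset (∀ i, V i) // A.card = 2}) :
    sigmaIso G s (sigmaIso G t p) = sigmaIso G (s + t) p := by
  apply Subtype.ext
  obtain ⟨x, y, hxy, hxyeq⟩ := Finset.card_eq_two.1 p.2
  show sigmaRaw s (sigmaRaw t p.1) = sigmaRaw (s + t) p.1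
  rw [hxyeq, sigmaRaw_pair t hxy, sigmaRaw_pair (s + t) hxy,
    sigmaRaw_pair s (mix_ne t hxy), mix_mix, mix_mix]

/-- `σ` as a monoid hom -/
def sigmaHom : Multiplicative (ι → ZMod 2) →* (tokenGraph (piBoxProd G) 2 ≃g tokenGraph (piBoxProd G) 2) :=
  MonoidHom.mk' (fun s => sigmaIso G s.toAdd) (by
    intro s t
    apply RelIso.ext
    intro p
    show sigmaIso G _ p = sigmaIso G _ (sigmaIso G _ p)
    rw [sigmaIso_comp]
    rfl)

lemma sigmaRaw_edge_fix (s : ι → ZMod 2) {x y : ∀ i, V i}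
    (h : (piBoxProd G).Adj x y) : sigmaRaw s ({x, y} : Finset _) = {x, y} := by
  obtain ⟨i, hi, hoff⟩ := h
  have hxy : x ≠ y := fun hh => hi.ne (congrFun hh i)
  rw [sigmaRaw_pair s hxy]
  rcases zmod2_cases (s i) with hs | hs
  · have h1 : mix s x y = x := by
      funext j
      by_cases hj : j = i
      · subst hj; simp [mix, hs]
      · by_cases hsj : s j = 1 <;> simp [mix, hsj, (hoff j hj).symm]
    have h2 : mix s y x = y := by
      funext j
      by_cases hj : j = i
      · subst hj; simp [mix, hs]
      · by_cases hsj : s j = 1 <;> simp [mix, hsj, hoff j hj]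
    rw [h1, h2]
  · have h1 : mix s x y = y := by
      funext j
      by_cases hj : j = i
      · subst hj; simp [mix, hs]
      · by_cases hsj : s j = 1 <;> simp [mix, hsj, hoff j hj]
    have h2 : mix s y x = x := by
      funext j
      by_cases hj : j = i
      · subst hj; simp [mix, hs]
      · by_cases hsj : s j = 1 <;> simp [mix, hsj, (hoff j hj).symm]
    rw [h1, h2, Finset.pair_comm]

lemma sigma_ker (s : ι → ZMod 2) (hnt : ∀ i, Nontrivial (V i))
    (h : ∀ p : Finset (∀ i, V i), p.card = 2 → sigmaRaw s p = p) : s = 0 ∨ s = 1 := by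
  haveI : ∀ i, Nonempty (V i) := fun i => (hnt i).to_nonempty
  by_contra hc
  push_neg at hc
  obtain ⟨h0, h1⟩ := hc
  have hex1 : ∃ i, s i = 1 := by
    by_contra hh
    push_neg at hh
    exact h0 (funext fun i => (zmod2_cases (s i)).resolve_right (hh i))
  have hex0 : ∃ j, s j = 0 := by
    by_contra hh
    push_neg at hh
    exact h1 (funext fun j => (zmod2_cases (s j)).resolve_left (hh j))
  obtain ⟨i, hi⟩ := hex1
  obtain ⟨j, hj⟩ := hex0
  have hij : i ≠ j := fun hh => by rw [hh, hj] at hi; exact one_ne_zero hi.symm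
  obtain ⟨x⟩ : Nonempty (∀ i, V i) := ⟨fun i => Classical.arbitrary _⟩
  obtain ⟨yi, hyi⟩ := exists_ne (x i)
  obtain ⟨yj, hyj⟩ := exists_ne (x j)
  set y : ∀ k, V k := Function.update (Function.update x i yi) j yj with hy
  have hyi' : y i = yi := by
    rw [hy, Function.update_of_ne hij, Function.update_self]
  have hyj' : y j = yj := by
    rw [hy, Function.update_self]
  have hxy : x ≠ y := fun hh => hyi (hyi' ▸ (congrFun hh i)).symm
  have hfix := h {x, y} (Finset.card_pair hxy)
  rw [sigmaRaw_pair s hxy] at hfix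
  have hmem : mix s x y ∈ ({x, y} : Finset (∀ i, V i)) := by
    rw [← hfix]; simp
  have hmx : mix s x y ≠ x := by
    intro hh
    have := congrFun hh i
    rw [mix_apply, if_pos hi, hyi'] at this
    exact hyi this
  have hmy : mix s x y ≠ y := by
    intro hh
    have := congrFun hh j
    rw [mix_apply, if_neg (by rw [hj]; exact zero_ne_one), hyj'] at this
    exact hyj this.symm
  rcases Finset.mem_insert.1 hmem with hh | hh
  · exact hmx hh
  · exact hmy (Finset.mem_singleton.1 hh)

end Sigma3
section FixLemma

lemma mem_of_closed_walk {W : Type*} {H : SimpleGraph W} {S : Set W}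
    (hcl : ∀ a b, a ∈ S → H.Adj a b → b ∈ S) {x y : W} (w : H.Walk x y) (hx : x ∈ S) :
    y ∈ S := by
  induction w with
  | nil => exact hx
  | cons h w ih => exact ih (hcl _ _ hx h)

lemma exists_adj_of_connected {W : Type*} {H : SimpleGraph W} (hconn : H.Connected)
    {x z : W} (hz : z ≠ x) : ∃ y, H.Adj x y := by
  obtain ⟨w⟩ := hconn.preconnected x z
  cases w with
  | nil => exact absurd rfl hz
  | cons h _ => exact ⟨_, h⟩

lemma edge_fix_id {W : Type*} [DecidableEq W] {H : SimpleGraph W} (hconn : H.Connected)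
    (φ : H ≃g H)
    (hfix : ∀ x y, H.Adj x y → ({φ x, φ y} : Finset W) = {x, y})
    (hbig : ∀ x y : W, ∃ z, z ≠ x ∧ z ≠ y) :
    ∀ v, φ v = v := by
  have hdisj : ∀ x y, H.Adj x y → (φ x = x ∧ φ y = y) ∨ (φ x = y ∧ φ y = x) := by
    intro x y h
    have hmemx : φ x ∈ ({x, y} : Finset W) := by
      rw [← hfix x y h]; simp
    have hmemy : φ y ∈ ({x, y} : Finset W) := by
      rw [← hfix x y h]; simp
    have hne : φ x ≠ φ y := fun hh => h.ne (φ.injective hh)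
    rcases Finset.mem_insert.1 hmemx with h1 | h1
    · left
      refine ⟨h1, ?_⟩
      rcases Finset.mem_insert.1 hmemy with h2 | h2
      · exact absurd (h2.trans h1.symm) hne.symm
      · exact Finset.mem_singleton.1 h2
    · right
      have h1' : φ x = y := Finset.mem_singleton.1 h1
      refine ⟨h1', ?_⟩
      rcases Finset.mem_insert.1 hmemy with h2 | h2
      · exact h2
      · exact absurd ((Finset.mem_singleton.1 h2).trans h1'.symm) hne.symm
  intro x
  by_contra hx
  obtain ⟨z, hz, _⟩ := hbig x x
  obtain ⟨y0, hy0⟩ := exists_adj_of_connected hconn hz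
  have hswap : φ x = y0 ∧ φ y0 = x := by
    rcases hdisj x y0 hy0 with ⟨h1, _⟩ | h1
    · exact absurd h1 hx
    · exact h1
  have hclosed : ∀ a b, a ∈ ({x, y0} : Set W) → H.Adj a b → b ∈ ({x, y0} : Set W) := by
    rintro a b (rfl | rfl) hadj
    · -- neighbors of x are y0 only
      rcases hdisj a b hadj with ⟨h1, _⟩ | ⟨h1, _⟩
      · exact absurd h1 hx
      · right; rw [← h1, hswap.1]; rfl
    · -- neighbors of y0 are x only
      rcases hdisj a b hadj with ⟨h1, _⟩ | ⟨h1, _⟩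
      · exact absurd (hswap.2.symm.trans h1) hy0.ne
      · left; rw [← h1, hswap.2]
  obtain ⟨z', hz1, hz2⟩ := hbig x y0
  have : z' ∈ ({x, y0} : Set W) := by
    obtain ⟨w⟩ := hconn.preconnected x z'
    exact mem_of_closed_walk hclosed w (Or.inl rfl)
  rcases this with h | h
  · exact hz1 h
  · exact hz2 h

end FixLemma

section EdgeStab
variable {W : Type*} [DecidableEq W]

/-- the subgroup of automorphisms of the 2-token graph fixing every vertex that
is an edge of the base graph -/
def edgeStab (G' : SimpleGraph W) : Subgroup (tokenGraph G' 2 ≃g tokenGraph G' 2) where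
  carrier := {τ | ∀ p : {A : Finset W // A.card = 2},
    (∃ x y, G'.Adj x y ∧ p.1 = {x, y}) → τ p = p}
  one_mem' := fun p _ => rfl
  mul_mem' := by
    intro a b ha hb p hp
    show a (b p) = p
    rw [hb p hp, ha p hp]
  inv_mem' := by
    intro a ha p hp
    show a.symm p = p
    conv_lhs => rw [← ha p hp]
    exact a.symm_apply_apply p

lemma mem_edgeStab {G' : SimpleGraph W} {τ : tokenGraph G' 2 ≃g tokenGraph G' 2} :
    τ ∈ edgeStab G' ↔ ∀ p : {A : Finset W // A.card = 2},
      (∃ x y, G'.Adj x y ∧ p.1 = {x, y}) → τ p = p := Iff.rfl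

end EdgeStab

/-- If a finite connected graph G is the box product of r ≥ 2 connected prime
factors, each with at least two vertices, then 2^{r−1}·|Aut(G)| divides
|Aut(F₂(G))|; in particular |Aut(F₂(G))| ≥ 2^{r−1}·|Aut(G)|. -/
theorem aut_tokenGraph_boxProd_lower_bound (r : ℕ) (hr : 2 ≤ r)
    (V : Fin r → Type u) [∀ i, Fintype (V i)] [∀ i, DecidableEq (V i)]
    (G : ∀ i, SimpleGraph (V i))
    (hconn : ∀ i, (G i).Connected) (hGconn : (piBoxProd G).Connected)
    (hnt : ∀ i, Nontrivial (V i)) (hprime : ∀ i, IsBoxPrime (G i)) :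
    (2 ^ (r - 1) * Nat.card (piBoxProd G ≃g piBoxProd G) ∣
      Nat.card (tokenGraph (piBoxProd G) 2 ≃g tokenGraph (piBoxProd G) 2)) ∧
    2 ^ (r - 1) * Nat.card (piBoxProd G ≃g piBoxProd G) ≤
      Nat.card (tokenGraph (piBoxProd G) 2 ≃g tokenGraph (piBoxProd G) 2) := by
  classical
  haveI : ∀ i, Nonempty (V i) := fun i => (hnt i).to_nonempty
  haveI : Finite (tokenGraph (piBoxProd G) 2 ≃g tokenGraph (piBoxProd G) 2) :=
    Finite.of_injective
      (fun τ => (τ : {A : Finset (∀ i, V i) // A.card = 2} → {A : Finset (∀ i, V i) // A.card = 2}))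
      DFunLike.coe_injective
  set N := edgeStab (piBoxProd G) with hN
  set Sg := (sigmaHom G).range with hSg
  -- the σ automorphisms fix every edge-vertex
  have hSgN : Sg ≤ N := by
    rintro τ ⟨s, rfl⟩ p ⟨x, y, hadj, hval⟩
    apply Subtype.ext
    show sigmaRaw s.toAdd p.1 = p.1
    rw [hval]
    exact sigmaRaw_edge_fix G s.toAdd hadj
  -- the induced automorphisms normalize N
  have hconj : ∀ φ : piBoxProd G ≃g piBoxProd G, ∀ ν ∈ N,
      Ind (piBoxProd G) 2 φ * ν * (Ind (piBoxProd G) 2 φ)⁻¹ ∈ N := by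
    intro φ ν hν p hp
    obtain ⟨x, y, hadj, hval⟩ := hp
    have hinv : (Ind (piBoxProd G) 2 φ)⁻¹ = Ind (piBoxProd G) 2 φ⁻¹ :=
      (map_inv (Ind (piBoxProd G) 2) φ).symm
    have hq : ∃ x' y', (piBoxProd G).Adj x' y' ∧
        ((Ind (piBoxProd G) 2 φ)⁻¹ p).1 = {x', y'} := by
      refine ⟨φ⁻¹ x, φ⁻¹ y, (φ⁻¹ : piBoxProd G ≃g piBoxProd G).map_adj_iff.mpr hadj, ?_⟩
      rw [hinv]
      rw [Ind_apply, hval]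
      simp
    have hfixq := hν _ hq
    show (Ind (piBoxProd G) 2 φ) (ν ((Ind (piBoxProd G) 2 φ)⁻¹ p)) = p
    rw [hfixq]
    exact (Ind (piBoxProd G) 2 φ).apply_symm_apply p
  -- triviality of the intersection
  have hbig : ∀ u v : ∀ i, V i, ∃ z, z ≠ u ∧ z ≠ v := by
    intro u v
    have h0r : 0 < r := by omega
    have h1r : 1 < r := by omega
    set i0 : Fin r := ⟨0, h0r⟩
    set i1 : Fin r := ⟨1, h1r⟩
    have h01 : i1 ≠ i0 := by
      intro h
      have := congrArg Fin.val h
      simp [i0, i1] at this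
    haveI := hnt i0
    haveI := hnt i1
    obtain ⟨u0, hu0⟩ := exists_ne (u i0)
    obtain ⟨v1, hv1⟩ := exists_ne (v i1)
    refine ⟨Function.update (Function.update u i1 v1) i0 u0, ?_, ?_⟩
    · intro h
      apply hu0
      have := congrFun h i0
      rwa [Function.update_self] at this
    · intro h
      apply hv1
      have := congrFun h i1
      rwa [Function.update_of_ne h01, Function.update_self] at this
  have htriv : ∀ φ : piBoxProd G ≃g piBoxProd G, Ind (piBoxProd G) 2 φ ∈ N → φ = 1 := by
    intro φ hφ
    have hfix : ∀ x y, (piBoxProd G).Adj x y → ({φ x, φ y} : Finset (∀ i, V i)) = {x, y} := by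
      intro x y h
      have hp := hφ ⟨{x, y}, Finset.card_pair h.ne⟩ ⟨x, y, h, rfl⟩
      have := congrArg Subtype.val hp
      rw [Ind_apply] at this
      simpa using this
    have := edge_fix_id hGconn φ hfix hbig
    exact RelIso.ext this
  -- the key divisibility
  have hkey := key_count (Ind (piBoxProd G) 2) N Sg hSgN hconj htriv
  -- 2^(r-1) divides the cardinality of Sg
  have hdvd2 : 2 ^ (r - 1) ∣ Nat.card Sg := by
    have hcardM : Nat.card (Multiplicative (Fin r → ZMod 2)) = 2 ^ r := by
      rw [Nat.card_congr Multiplicative.toAdd, Nat.card_eq_fintype_card,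
        Fintype.card_fun]
      simp
    set K := (sigmaHom G).ker with hK
    have hrange : Nat.card (Multiplicative (Fin r → ZMod 2) ⧸ K) = Nat.card Sg :=
      Nat.card_congr (QuotientGroup.quotientKerEquivRange (sigmaHom G)).toEquiv
    have hM : Nat.card Sg * Nat.card K = 2 ^ r := by
      rw [← hrange, ← hcardM, (Subgroup.card_eq_card_quotient_mul_card_subgroup K)]
    set g : Multiplicative (Fin r → ZMod 2) := Multiplicative.ofAdd (1 : Fin r → ZMod 2)
    have hker : K ≤ Subgroup.zpowers g := by
      intro s hs
      have hfixall : ∀ p : Finset (∀ i, V i), p.card = 2 → sigmaRaw s.toAdd p = p := by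
        intro p hp
        have h1 : sigmaHom G s ⟨p, hp⟩ = ⟨p, hp⟩ := by
          rw [show sigmaHom G s = 1 from hs]; rfl
        exact congrArg Subtype.val h1
      rcases sigma_ker s.toAdd hnt hfixall with h | h
      · have : s = 1 := by
          have : s = Multiplicative.ofAdd s.toAdd := rfl
          rw [this, h]; rfl
        rw [this]; exact one_mem _
      · have : s = g := by
          have : s = Multiplicative.ofAdd s.toAdd := rfl
          rw [this, h]
        rw [this]; exact Subgroup.mem_zpowers g
    have hg2 : Nat.card (Subgroup.zpowers g) = 2 := by
      rw [Nat.card_zpowers]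
      apply orderOf_eq_prime
      · show g * g = 1
        have : (1 : Fin r → ZMod 2) + 1 = 0 := by
          funext i
          show (1 : ZMod 2) + 1 = 0
          decide
        show Multiplicative.ofAdd ((1 : Fin r → ZMod 2) + 1) = 1
        rw [this]; rfl
      · intro hc
        have h1r : 0 < r := by omega
        have := congrFun (congrArg Multiplicative.toAdd hc) ⟨0, h1r⟩
        exact one_ne_zero this
    have hKdvd : Nat.card K ∣ 2 := by
      have h' := Subgroup.card_dvd_of_le hker
      rwa [hg2] at h'
    rcases (Nat.prime_two.eq_one_or_self_of_dvd _ hKdvd) with h | h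
    · rw [h, mul_one] at hM
      rw [hM]
      exact pow_dvd_pow 2 (by omega)
    · rw [h] at hM
      have hr' : 2 ^ (r - 1) * 2 = 2 ^ r := by
        rw [← pow_succ]
        congr 1
        omega
      have : Nat.card Sg = 2 ^ (r - 1) := by
        apply Nat.eq_of_mul_eq_mul_right (show 0 < 2 by norm_num)
        rw [hM, hr']
      rw [this]
  have hfinal : 2 ^ (r - 1) * Nat.card (piBoxProd G ≃g piBoxProd G) ∣
      Nat.card (tokenGraph (piBoxProd G) 2 ≃g tokenGraph (piBoxProd G) 2) :=
    dvd_trans (mul_dvd_mul_right hdvd2 _) hkey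
  refine ⟨hfinal, Nat.le_of_dvd ?_ hfinal⟩
  haveI : Nonempty (tokenGraph (piBoxProd G) 2 ≃g tokenGraph (piBoxProd G) 2) := ⟨1⟩
  exact Nat.card_pos
end

section
/- Let m ≤ n be positive integers, 1 ≤ k ≤ n, r := min(m,k), and 2 ≤ i ≤ r. Let H_i and H_{i−1} be the sets of vertices A of F_k(K_{m,n}) with |A ∩ X| = i and |A ∩ X| = i − 1, respectively. Then any two distinct vertices A, B ∈ H_i have distinct neighborhoods in H_{i−1}: N(A) ∩ H_{i−1} ≠ N(B) ∩ H_{i−1}, where N denotes the neighborhood in F_k(K_{m,n}). -/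
open Finset

private lemma card_insert_erase_inter {V : Type*} [DecidableEq V]
    (A B : Finset V) (x y : V) (hy : y ∉ A) :
    ((insert y (A.erase x)) ∩ B).card
      = (A ∩ B).card - (if x ∈ A ∩ B then 1 else 0) + (if y ∈ B then 1 else 0) := by
  have hy' : y ∉ (A ∩ B).erase x := by
    simp only [Finset.mem_erase, Finset.mem_inter]
    tauto
  by_cases hyB : y ∈ B
  · rw [Finset.insert_inter_of_mem hyB, Finset.erase_inter,
      Finset.card_insert_of_notMem hy']
    by_cases hxAB : x ∈ A ∩ B
    · rw [Finset.card_erase_of_mem hxAB, if_pos hxAB, if_pos hyB]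
    · rw [Finset.erase_eq_of_notMem hxAB, if_neg hxAB, if_pos hyB]; omega
  · rw [Finset.insert_inter_of_notMem hyB, Finset.erase_inter]
    by_cases hxAB : x ∈ A ∩ B
    · rw [Finset.card_erase_of_mem hxAB, if_pos hxAB, if_neg hyB]; omega
    · rw [Finset.erase_eq_of_notMem hxAB, if_neg hxAB, if_neg hyB]; omega

private lemma rcount_eq {m n : ℕ} (S : Finset (Fin m ⊕ Fin n)) :
    ((univ : Finset (Fin n)).filter (fun j => Sum.inr j ∈ S)).card
      = (S.filter (fun v => v.isLeft = false)).card := by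
  have himg := Finset.card_image_of_injective
    ((univ : Finset (Fin n)).filter (fun j => Sum.inr j ∈ S))
    (Sum.inr_injective : Function.Injective (Sum.inr : Fin n → Fin m ⊕ Fin n))
  rw [← himg]
  congr 1
  ext v
  cases v <;> simp

private lemma lr_card {m n : ℕ} (S : Finset (Fin m ⊕ Fin n)) :
    (S.filter (fun v => v.isLeft = true)).card
      + (S.filter (fun v => v.isLeft = false)).card = S.card := by
  have hfe : S.filter (fun v => v.isLeft = false)
      = S.filter (fun v => ¬ v.isLeft = true) := by
    ext v; simp
  rw [hfe]
  exact Finset.card_filter_add_card_filter_not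
    (fun v : Fin m ⊕ Fin n => v.isLeft = true)

private lemma symmDiff_insert_erase {V : Type*} [DecidableEq V]
    (A : Finset V) (x y : V) (hx : x ∈ A) (hy : y ∉ A) (hxy : x ≠ y) :
    symmDiff A (insert y (A.erase x)) = {x, y} := by
  ext v
  simp only [Finset.mem_symmDiff, Finset.mem_insert, Finset.mem_erase,
    Finset.mem_singleton]
  by_cases h1 : v = x <;> by_cases h2 : v = y <;>
    simp [h1, h2, hx, hy, hxy, Ne.symm hxy]

private lemma card_symmDiff' {V : Type*} [DecidableEq V] (A B : Finset V) :
    (symmDiff A B).card + 2 * (A ∩ B).card = A.card + B.card := by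
  rw [symmDiff_def]
  have hd : Disjoint (A \ B) (B \ A) := disjoint_sdiff_sdiff
  have : ((A \ B) ⊔ (B \ A)).card = (A \ B).card + (B \ A).card :=
    Finset.card_union_of_disjoint hd
  have h1 := Finset.card_inter_add_card_sdiff A B
  have h2 := Finset.card_inter_add_card_sdiff B A
  rw [Finset.inter_comm B A] at h2
  omega

private lemma key {m n k i : ℕ} (hkn : k ≤ n) (hi1 : 2 ≤ i) (hik : i ≤ k)
    (A B : Finset (Fin m ⊕ Fin n)) (hAc : A.card = k) (hBc : B.card = k)
    (hAi : (A.filter (fun v => v.isLeft = true)).card = i)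
    (hBi : (B.filter (fun v => v.isLeft = true)).card = i)
    (hne : A ≠ B) :
    ∃ x y, x ∈ A ∧ y ∉ A ∧ x.isLeft = true ∧ y.isLeft = false ∧
      ((insert y (A.erase x)) ∩ B).card + 2 ≤ k := by
  set t := (A ∩ B).card with ht
  have htk : t + 1 ≤ k := by
    have h1 : t ≤ k := hAc ▸ Finset.card_le_card Finset.inter_subset_left
    rcases eq_or_lt_of_le h1 with h | h
    · exfalso
      have he : A ∩ B = A :=
        Finset.eq_of_subset_of_card_le Finset.inter_subset_left (by omega)
      have hsub : A ⊆ B := by rw [← he]; exact Finset.inter_subset_right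
      exact hne (Finset.eq_of_subset_of_card_le hsub (by omega))
    · omega
  have hrA : (A.filter (fun v => v.isLeft = false)).card = k - i := by
    have := lr_card A; omega
  have hJA : ((univ : Finset (Fin n)).filter (fun j => ¬ Sum.inr j ∈ A)).card
      = n - (k - i) := by
    have hsplit := Finset.card_filter_add_card_filter_not
      (s := (univ : Finset (Fin n))) (p := fun j => Sum.inr j ∈ A)
    rw [rcount_eq, hrA, Finset.card_univ, Fintype.card_fin] at hsplit
    omega
  have hBA : (B \ A).card = k - t := by
    have := Finset.card_inter_add_card_sdiff B A
    rw [Finset.inter_comm B A] at this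
    omega
  by_cases hS : ∃ x ∈ A ∩ B, x.isLeft = true
  · obtain ⟨x, hxAB, hxl⟩ := hS
    have hxA : x ∈ A := (Finset.mem_inter.mp hxAB).1
    have htpos : 0 < t := Finset.card_pos.mpr ⟨x, hxAB⟩
    by_cases hT : ∃ j : Fin n, Sum.inr j ∉ A ∧ Sum.inr j ∉ B
    · obtain ⟨j, hjA, hjB⟩ := hT
      refine ⟨x, Sum.inr j, hxA, hjA, hxl, rfl, ?_⟩
      rw [card_insert_erase_inter A B x _ hjA, if_pos hxAB, if_neg hjB]
      omega
    · push_neg at hT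
      have hsub : (univ : Finset (Fin n)).filter (fun j => ¬ Sum.inr j ∈ A)
          ⊆ (univ : Finset (Fin n)).filter (fun j => Sum.inr j ∈ B \ A) := by
        intro j hj
        rw [Finset.mem_filter] at hj ⊢
        exact ⟨hj.1, Finset.mem_sdiff.mpr ⟨hT j hj.2, hj.2⟩⟩
      have hc1 : n - (k - i) ≤ (B \ A).card := by
        calc n - (k - i) = _ := hJA.symm
          _ ≤ _ := Finset.card_le_card hsub
          _ = ((B \ A).filter (fun v => v.isLeft = false)).card := rcount_eq _
          _ ≤ (B \ A).card := Finset.card_le_card (Finset.filter_subset _ _)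
      have ht2 : t + 2 ≤ k := by omega
      have hpos : 0 < ((univ : Finset (Fin n)).filter
          (fun j => ¬ Sum.inr j ∈ A)).card := by omega
      obtain ⟨j, hj⟩ := Finset.card_pos.mp hpos
      have hjA : Sum.inr j ∉ A := (Finset.mem_filter.mp hj).2
      refine ⟨x, Sum.inr j, hxA, hjA, hxl, rfl, ?_⟩
      rw [card_insert_erase_inter A B x _ hjA, if_pos hxAB]
      split_ifs <;> omega
  · push_neg at hS
    obtain ⟨x, hx⟩ : (A.filter (fun v => v.isLeft = true)).Nonempty :=
      Finset.card_pos.mp (by omega)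
    obtain ⟨hxA, hxl⟩ := Finset.mem_filter.mp hx
    have hxB : x ∉ B := fun hB => hS x (Finset.mem_inter.mpr ⟨hxA, hB⟩) hxl
    have hxAB : x ∉ A ∩ B := by simp [hxB]
    have hABL : B.filter (fun v => v.isLeft = true)
        ⊆ (B \ A).filter (fun v => v.isLeft = true) := by
      intro v hv
      rw [Finset.mem_filter] at hv ⊢
      refine ⟨Finset.mem_sdiff.mpr ⟨hv.1, fun hvA => ?_⟩, hv.2⟩
      exact hS v (Finset.mem_inter.mpr ⟨hvA, hv.1⟩) hv.2
    have hBAleft : i ≤ ((B \ A).filter (fun v => v.isLeft = true)).card := by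
      rw [← hBi]; exact Finset.card_le_card hABL
    have htki : t + i ≤ k := by
      have hs2 : A.filter (fun v => v.isLeft = true) ⊆ A \ B := by
        intro v hv
        rw [Finset.mem_filter] at hv
        refine Finset.mem_sdiff.mpr ⟨hv.1, fun hvB => ?_⟩
        exact hS v (Finset.mem_inter.mpr ⟨hv.1, hvB⟩) hv.2
      have := Finset.card_le_card hs2
      have hAB' := Finset.card_inter_add_card_sdiff A B
      omega
    by_cases hT : ∃ j : Fin n, Sum.inr j ∉ A ∧ Sum.inr j ∉ B
    · obtain ⟨j, hjA, hjB⟩ := hT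
      refine ⟨x, Sum.inr j, hxA, hjA, hxl, rfl, ?_⟩
      rw [card_insert_erase_inter A B x _ hjA, if_neg hxAB, if_neg hjB]
      omega
    · push_neg at hT
      have hsub : (univ : Finset (Fin n)).filter (fun j => ¬ Sum.inr j ∈ A)
          ⊆ (univ : Finset (Fin n)).filter (fun j => Sum.inr j ∈ B \ A) := by
        intro j hj
        rw [Finset.mem_filter] at hj ⊢
        exact ⟨hj.1, Finset.mem_sdiff.mpr ⟨hT j hj.2, hj.2⟩⟩
      have hsplitBA := lr_card (B \ A)
      have hc1 : n - (k - i)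
          ≤ ((B \ A).filter (fun v => v.isLeft = false)).card := by
        calc n - (k - i) = _ := hJA.symm
          _ ≤ _ := Finset.card_le_card hsub
          _ = _ := rcount_eq _
      have ht2 : t + i + i ≤ k := by omega
      have hpos : 0 < ((univ : Finset (Fin n)).filter
          (fun j => ¬ Sum.inr j ∈ A)).card := by omega
      obtain ⟨j, hj⟩ := Finset.card_pos.mp hpos
      have hjA : Sum.inr j ∉ A := (Finset.mem_filter.mp hj).2
      refine ⟨x, Sum.inr j, hxA, hjA, hxl, rfl, ?_⟩
      rw [card_insert_erase_inter A B x _ hjA, if_neg hxAB]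
      split_ifs <;> omega



/-- The number of elements of a finite set of vertices of `K_{m,n}`
(on `Fin m ⊕ Fin n`) lying in the left part `X`. -/
def leftCard {m n : ℕ} (A : Finset (Fin m ⊕ Fin n)) : ℕ :=
  (A.filter (fun v => v.isLeft = true)).card

/-- `H_i`: the set of vertices `A` of `F_k(K_{m,n})` with `|A ∩ X| = i`. -/
def levelSet (m n k i : ℕ) :
    Set {A : Finset (Fin m ⊕ Fin n) // A.card = k} :=
  {A | leftCard A.1 = i}

/-- For 2 ≤ i ≤ r := min m k, any two distinct vertices A, B ∈ H_i of
F_k(K_{m,n}) have distinct neighborhoods in H_{i−1}. -/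
theorem tokenGraph_Kmn_distinct_neighborhoods (m n k i : ℕ) (hm : 1 ≤ m)
    (hmn : m ≤ n) (hk1 : 1 ≤ k) (hk2 : k ≤ n) (hi1 : 2 ≤ i)
    (hi2 : i ≤ min m k)
    (A B : {A : Finset (Fin m ⊕ Fin n) // A.card = k})
    (hA : A ∈ levelSet m n k i) (hB : B ∈ levelSet m n k i) (hAB : A ≠ B) :
    (tokenGraph (completeBipartiteGraph (Fin m) (Fin n)) k).neighborSet A ∩
        levelSet m n k (i - 1) ≠
      (tokenGraph (completeBipartiteGraph (Fin m) (Fin n)) k).neighborSet B ∩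
        levelSet m n k (i - 1) := by
  intro h
  have hik : i ≤ k := le_trans hi2 (min_le_right _ _)
  have hne : A.1 ≠ B.1 := fun hh => hAB (Subtype.ext hh)
  have hAi : (A.1.filter (fun v => v.isLeft = true)).card = i := hA
  have hBi : (B.1.filter (fun v => v.isLeft = true)).card = i := hB
  obtain ⟨x, y, hxA, hyA, hxl, hyl, hcard⟩ :=
    key hk2 hi1 hik A.1 B.1 A.2 B.2 hAi hBi hne
  have hxy : x ≠ y := by
    intro e; rw [e, hyl] at hxl; exact Bool.false_ne_true hxl
  set C : Finset (Fin m ⊕ Fin n) := insert y (A.1.erase x) with hC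
  have hyC : y ∉ A.1.erase x := fun hh => hyA (Finset.mem_erase.mp hh).2
  have hCcard : C.card = k := by
    rw [hC, Finset.card_insert_of_notMem hyC, Finset.card_erase_of_mem hxA, A.2]
    omega
  have hCleft : leftCard C = i - 1 := by
    rw [hC]
    unfold leftCard
    rw [Finset.filter_insert, if_neg (by simp [hyl]), Finset.filter_erase,
      Finset.card_erase_of_mem (Finset.mem_filter.mpr ⟨hxA, hxl⟩), hAi]
  have hyr : y.isRight = true := by cases y <;> simp_all
  have hAdjA : (tokenGraph (completeBipartiteGraph (Fin m) (Fin n)) k).Adj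
      A ⟨C, hCcard⟩ :=
    ⟨x, y, Or.inl ⟨by simp [hxl], by simp [hyr]⟩,
      symmDiff_insert_erase A.1 x y hxA hyA hxy⟩
  have hmem : (⟨C, hCcard⟩ : {A : Finset (Fin m ⊕ Fin n) // A.card = k}) ∈
      (tokenGraph (completeBipartiteGraph (Fin m) (Fin n)) k).neighborSet A ∩
        levelSet m n k (i - 1) := ⟨hAdjA, hCleft⟩
  rw [h] at hmem
  obtain ⟨a, b, hab, hs⟩ := hmem.1
  have habne : a ≠ b := (completeBipartiteGraph (Fin m) (Fin n)).ne_of_adj hab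
  have h2 : ({a, b} : Finset (Fin m ⊕ Fin n)).card = 2 := by
    rw [Finset.card_insert_of_notMem (by simpa using habne), Finset.card_singleton]
  have hsd := card_symmDiff' B.1 C
  rw [hs, h2, B.2, hCcard, Finset.inter_comm] at hsd
  omega
end

section
/- Let m, n, k be positive integers with 1 ≤ k ≤ m + n − 1, and let A be a vertex of F_k(K_{m,n}) with |A ∩ X| = i (so |A ∩ Y| = k − i). Then the degree of A in F_k(K_{m,n}) equals i·(n − k + i) + (k − i)·(m − i). -/
lemma symmDiff_pair_decomp {V : Type*} [DecidableEq V] {A B : Finset V} {a b : V}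
    (hcard : A.card = B.card) (hne : a ≠ b) (h : symmDiff A B = {a, b}) :
    ∃ x y, x ∈ A ∧ y ∉ A ∧ ({x, y} : Finset V) = {a, b} ∧ B = insert y (A.erase x) := by
  have hu : (A \ B) ∪ (B \ A) = {a, b} := by
    ext z; rw [← h]; simp [Finset.mem_symmDiff, Finset.mem_union, Finset.mem_sdiff]
  have hd : Disjoint (A \ B) (B \ A) := disjoint_sdiff_sdiff
  have h1 : (A \ B).card + (A ∩ B).card = A.card := Finset.card_sdiff_add_card_inter A B
  have h2 : (B \ A).card + (B ∩ A).card = B.card := Finset.card_sdiff_add_card_inter B A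
  rw [Finset.inter_comm] at h2
  have htot : (A \ B).card + (B \ A).card = 2 := by
    rw [← Finset.card_union_of_disjoint hd, hu, Finset.card_pair hne]
  have hc1 : (A \ B).card = 1 := by omega
  have hc2 : (B \ A).card = 1 := by omega
  obtain ⟨x, hx⟩ := Finset.card_eq_one.mp hc1
  obtain ⟨y, hy⟩ := Finset.card_eq_one.mp hc2
  have hxA : x ∈ A ∧ x ∉ B := by
    have := hx ▸ Finset.mem_singleton_self x
    simpa [Finset.mem_sdiff] using Finset.mem_sdiff.mp (hx ▸ Finset.mem_singleton_self x)
  have hyB : y ∈ B ∧ y ∉ A := by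
    simpa [Finset.mem_sdiff] using Finset.mem_sdiff.mp (hy ▸ Finset.mem_singleton_self y)
  refine ⟨x, y, hxA.1, hyB.2, ?_, ?_⟩
  · rw [← hu, hx, hy]; ext z; simp
  · ext z
    simp only [Finset.mem_insert, Finset.mem_erase]
    constructor
    · intro hz
      by_cases hzA : z ∈ A
      · right
        refine ⟨?_, hzA⟩
        rintro rfl; exact hxA.2 hz
      · left
        have : z ∈ B \ A := Finset.mem_sdiff.mpr ⟨hz, hzA⟩
        rw [hy] at this; simpa using this
    · rintro (rfl | ⟨hzx, hzA⟩)
      · exact hyB.1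
      · by_contra hzB
        have : z ∈ A \ B := Finset.mem_sdiff.mpr ⟨hzA, hzB⟩
        rw [hx] at this
        exact hzx (by simpa using this)

lemma univ_filter_isLeft_card (m n : ℕ) :
    ((Finset.univ : Finset (Fin m ⊕ Fin n)).filter (fun v => v.isLeft = true)).card = m := by
  have h : (Finset.univ.filter fun v : Fin m ⊕ Fin n => v.isLeft = true) =
      Finset.univ.map ⟨Sum.inl, Sum.inl_injective⟩ := by
    ext v; cases v <;> simp
  simp [h]

lemma univ_filter_isRight_card (m n : ℕ) :
    ((Finset.univ : Finset (Fin m ⊕ Fin n)).filter (fun v => v.isRight = true)).card = n := by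
  have h : (Finset.univ.filter fun v : Fin m ⊕ Fin n => v.isRight = true) =
      Finset.univ.map ⟨Sum.inr, Sum.inr_injective⟩ := by
    ext v; cases v <;> simp
  simp [h]

lemma filter_add_filter_compl_card {α : Type*} [Fintype α] [DecidableEq α]
    (s : Finset α) (p : α → Prop) [DecidablePred p] :
    (s.filter p).card + (sᶜ.filter p).card = (Finset.univ.filter p).card := by
  rw [← Finset.card_union_of_disjoint
    (Finset.disjoint_filter_filter disjoint_compl_right),
    ← Finset.filter_union, Finset.union_compl]

lemma filter_isRight_card_of_leftCard {m n k i : ℕ} (A : Finset (Fin m ⊕ Fin n))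
    (hA : (A.filter (fun v => v.isLeft = true)).card = i) (hk : A.card = k) :
    (A.filter (fun v => v.isRight = true)).card = k - i := by
  have h := Finset.card_filter_add_card_filter_not
    (s := A) (p := fun v => v.isLeft = true)
  have he : A.filter (fun v => ¬(v.isLeft = true)) = A.filter (fun v => v.isRight = true) := by
    apply Finset.filter_congr
    intro v _; cases v <;> simp
  rw [he] at h
  omega
/-- A vertex A of F_k(K_{m,n}) with |A ∩ X| = i (and so |A ∩ Y| = k − i) has
degree i·(n − (k − i)) + (k − i)·(m − i). -/
theorem tokenGraph_Kmn_degree (m n k : ℕ) (hm : 1 ≤ m) (hn : 1 ≤ n)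
    (hk1 : 1 ≤ k) (hk2 : k ≤ m + n - 1)
    (A : {A : Finset (Fin m ⊕ Fin n) // A.card = k}) (i : ℕ)
    (hA : leftCard A.1 = i) :
    ((tokenGraph (completeBipartiteGraph (Fin m) (Fin n)) k).neighborSet
        A).ncard = i * (n - (k - i)) + (k - i) * (m - i) := by
  classical
  set G := completeBipartiteGraph (Fin m) (Fin n) with hG
  set P : Finset ((Fin m ⊕ Fin n) × (Fin m ⊕ Fin n)) := (A.1 ×ˢ A.1ᶜ).filter (fun p => G.Adj p.1 p.2) with hP
  have hmemP : ∀ p : (Fin m ⊕ Fin n) × (Fin m ⊕ Fin n), p ∈ P ↔ p.1 ∈ A.1 ∧ p.2 ∉ A.1 ∧ G.Adj p.1 p.2 := by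
    intro p
    simp [hP, Finset.mem_filter, Finset.mem_product, and_assoc]
  set g : (Fin m ⊕ Fin n) × (Fin m ⊕ Fin n) → Finset (Fin m ⊕ Fin n) := fun p => insert p.2 (A.1.erase p.1) with hg
  -- basic facts
  have hgsd : ∀ p : (Fin m ⊕ Fin n) × (Fin m ⊕ Fin n), p ∈ P → symmDiff A.1 (g p) = {p.1, p.2} := by
    intro p hp
    obtain ⟨h1, h2, h3⟩ := (hmemP p).mp hp
    have hne : p.1 ≠ p.2 := G.ne_of_adj h3
    ext z
    simp only [Finset.mem_symmDiff, hg, Finset.mem_insert, Finset.mem_erase]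
    by_cases hz1 : z = p.1 <;> by_cases hz2 : z = p.2 <;> subst_vars <;> simp_all <;> tauto
  have hgcard : ∀ p : (Fin m ⊕ Fin n) × (Fin m ⊕ Fin n), p ∈ P → (g p).card = k := by
    intro p hp
    obtain ⟨h1, h2, h3⟩ := (hmemP p).mp hp
    have : p.2 ∉ A.1.erase p.1 := fun h => h2 (Finset.mem_of_mem_erase h)
    rw [hg]
    simp only []
    rw [Finset.card_insert_of_notMem this, Finset.card_erase_of_mem h1, A.2]
    omega
  -- image description
  have himg : Subtype.val '' ((tokenGraph G k).neighborSet A) = g '' ↑P := by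
    ext B
    constructor
    · rintro ⟨⟨B, hB⟩, hadj, rfl⟩
      obtain ⟨a, b, hab, hsd⟩ := hadj
      obtain ⟨x, y, hx, hy, hxy, hBeq⟩ :=
        symmDiff_pair_decomp (A.2.trans hB.symm) (G.ne_of_adj hab) hsd
      have hxyne : x ≠ y := fun h => hy (h ▸ hx)
      have hxmem : x = a ∨ x = b := by
        have := hxy ▸ Finset.mem_insert_self x {y}
        simpa using this
      have hymem : y = a ∨ y = b := by
        have : y ∈ ({x, y} : Finset _) := by simp
        rw [hxy] at this; simpa using this
      have hadjxy : G.Adj x y := by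
        rcases hxmem with rfl | rfl
        · rcases hymem with rfl | rfl
          · exact absurd rfl hxyne
          · exact hab
        · rcases hymem with rfl | rfl
          · exact hab.symm
          · exact absurd rfl hxyne
      refine ⟨(x, y), ?_, hBeq.symm⟩
      exact Finset.mem_coe.mpr ((hmemP (x, y)).mpr ⟨hx, hy, hadjxy⟩)
    · rintro ⟨p, hp, rfl⟩
      have hp' : p ∈ P := Finset.mem_coe.mp hp
      obtain ⟨h1, h2, h3⟩ := (hmemP p).mp hp'
      exact ⟨⟨g p, hgcard p hp'⟩, ⟨p.1, p.2, h3, hgsd p hp'⟩, rfl⟩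
  -- injectivity on P
  have hinj : Set.InjOn g ↑P := by
    intro p hp q hq heq
    have hp' := (hmemP p).mp (Finset.mem_coe.mp hp)
    have hq' := (hmemP q).mp (Finset.mem_coe.mp hq)
    have hpair : ({p.1, p.2} : Finset (Fin m ⊕ Fin n)) = {q.1, q.2} := by
      rw [← hgsd p hp, ← hgsd q hq, heq]
    have h1 : p.1 = q.1 := by
      have : p.1 ∈ ({q.1, q.2} : Finset (Fin m ⊕ Fin n)) := hpair ▸ Finset.mem_insert_self _ _
      rcases Finset.mem_insert.mp this with h | h
      · exact h
      · exact absurd (Finset.mem_singleton.mp h ▸ hp'.1) hq'.2.1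
    have h2 : p.2 = q.2 := by
      have : p.2 ∈ ({q.1, q.2} : Finset (Fin m ⊕ Fin n)) := by
        rw [← hpair]; simp
      rcases Finset.mem_insert.mp this with h | h
      · exact absurd (h ▸ hp'.2.1) (fun hh => hp'.2.1 (h ▸ hq'.1))
      · exact Finset.mem_singleton.mp h
    exact Prod.ext h1 h2
  -- reduce ncard to P.card
  rw [← Set.ncard_image_of_injective _ Subtype.val_injective, himg,
    Set.ncard_image_of_injOn hinj, Set.ncard_coe_finset]
  -- split P
  have hsplit : P = ((A.1.filter (fun v => v.isLeft = true)) ×ˢ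
        (A.1ᶜ.filter (fun v => v.isRight = true))) ∪
      ((A.1.filter (fun v => v.isRight = true)) ×ˢ
        (A.1ᶜ.filter (fun v => v.isLeft = true))) := by
    ext p
    simp only [hmemP, Finset.mem_union, Finset.mem_product, Finset.mem_filter,
      Finset.mem_compl, hG, completeBipartiteGraph_adj]
    tauto
  have hdis : Disjoint ((A.1.filter (fun v => v.isLeft = true)) ×ˢ
        (A.1ᶜ.filter (fun v => v.isRight = true)))
      ((A.1.filter (fun v => v.isRight = true)) ×ˢ
        (A.1ᶜ.filter (fun v => v.isLeft = true))) := by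
    rw [Finset.disjoint_left]
    rintro p hp hq
    rw [Finset.mem_product, Finset.mem_filter] at hp hq
    cases hh : p.1 <;> simp [hh] at hp hq <;> simp_all
  -- cards
  have hik : i ≤ k := by
    have h := Finset.card_filter_le A.1 (fun v => v.isLeft = true)
    rw [A.2] at h
    unfold leftCard at hA
    omega
  have hL : (A.1.filter (fun v => v.isLeft = true)).card = i := hA
  have hR : (A.1.filter (fun v => v.isRight = true)).card = k - i :=
    filter_isRight_card_of_leftCard A.1 hA A.2
  have hcL : (A.1ᶜ.filter (fun v => v.isLeft = true)).card = m - i := by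
    have := filter_add_filter_compl_card A.1 (fun v : (Fin m ⊕ Fin n) => v.isLeft = true)
    rw [hL, univ_filter_isLeft_card] at this
    omega
  have hcR : (A.1ᶜ.filter (fun v => v.isRight = true)).card = n - (k - i) := by
    have := filter_add_filter_compl_card A.1 (fun v : (Fin m ⊕ Fin n) => v.isRight = true)
    rw [hR, univ_filter_isRight_card] at this
    omega
  rw [hsplit, Finset.card_union_of_disjoint hdis, Finset.card_product,
    Finset.card_product, hL, hR, hcL, hcR]
end
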